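/- arXiv:0811.4400 — 7 statements merged into one kernel-verified Lean document; each statement's English description precedes it below -/
import Mathlib

section
/- Let (x_n)_{n∈ℕ} be a sequence with x_0 = 0 and x_n > 0 for n ≥ 1, and suppose w : (0,∞) → [0,∞) is a measurable function solving the Stieltjes moment problem for the factorials, i.e. ∫₀^∞ t^n w(t) dt = x_n! for all n ∈ ℕ. Then for all n, m ∈ ℕ: (1/π) ∫_ℂ w(|z|²) z^n (conj z)^m dA(z) = δ_{n,m} · x_n!. Consequently the coherent states v_z = N(|z|²)^{−1/2} Σ_n (z^n/√(x_n!)) e_n resolve the identity on ℓ²(ℕ,ℂ) with respect to the measure w(|z|²) N(|z|²) dA(z)/π. -/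
open MeasureTheory Set Real

/-- The generalized factorial `xₙ! = x 1 * x 2 * ⋯ * x n` (with `x₀! = 1`). -/
noncomputable def gfact (x : ℕ → ℝ) (n : ℕ) : ℝ := ∏ k ∈ Finset.range n, x (k + 1)

/-- The associated exponential `N(t) = Σ tⁿ/xₙ!`. -/
noncomputable def gexp (x : ℕ → ℝ) (t : ℝ) : ℝ := ∑' n : ℕ, t ^ n / gfact x n

/-- The coherent state coefficients `(e_n , v_z) = N(|z|²)^{-1/2} zⁿ/√(xₙ!)`. -/
noncomputable def gcoh (x : ℕ → ℝ) (z : ℂ) (n : ℕ) : ℂ :=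
  (Real.sqrt (gexp x (‖z‖ ^ 2)))⁻¹ * z ^ n / Real.sqrt (gfact x n)

-- theta integral
lemma theta_int (n m : ℕ) :
    (∫ θ in Set.Ioo (-Real.pi) Real.pi,
        Complex.exp (↑θ * Complex.I) ^ n * Complex.exp (-(↑θ * Complex.I)) ^ m)
    = if n = m then ((2 * Real.pi : ℝ) : ℂ) else 0 := by
  have hpi : -Real.pi ≤ Real.pi := by linarith [Real.pi_pos]
  have hfun : ∀ θ : ℝ, Complex.exp (↑θ * Complex.I) ^ n * Complex.exp (-(↑θ * Complex.I)) ^ m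
      = Complex.exp ((((n : ℤ) - m : ℤ) : ℂ) * Complex.I * θ) := by
    intro θ
    rw [← Complex.exp_nat_mul, ← Complex.exp_nat_mul, ← Complex.exp_add]
    congr 1
    push_cast
    ring
  simp only [hfun]
  by_cases h : n = m
  · subst h
    simp only [sub_self, Int.cast_zero, zero_mul, Complex.exp_zero, if_pos rfl]
    rw [setIntegral_const, measureReal_def, Real.volume_Ioo,
      ENNReal.toReal_ofReal (by linarith [Real.pi_pos] : (0:ℝ) ≤ Real.pi - -Real.pi)]
    rw [Complex.real_smul]
    push_cast
    ring
  · have hc : (((n : ℤ) - m : ℤ) : ℂ) * Complex.I ≠ 0 := by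
      simp only [ne_eq, mul_eq_zero, Complex.I_ne_zero, or_false]
      exact_mod_cast sub_ne_zero.mpr (by exact_mod_cast h : ((n : ℤ)) ≠ m)
    rw [← MeasureTheory.integral_Ioc_eq_integral_Ioo,
      ← intervalIntegral.integral_of_le hpi, integral_exp_mul_complex hc]
    rw [if_neg h]
    set k : ℤ := (n : ℤ) - m
    have h1 : Complex.exp ((k : ℂ) * Complex.I * ↑Real.pi) = (-1 : ℂ) ^ k := by
      rw [show (k : ℂ) * Complex.I * ↑Real.pi = (k : ℤ) * (↑Real.pi * Complex.I) by push_cast; ring,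
        Complex.exp_int_mul, Complex.exp_pi_mul_I]
    have h2 : Complex.exp ((k : ℂ) * Complex.I * ↑(-Real.pi)) = ((-1 : ℂ) ^ k)⁻¹ := by
      push_cast
      rw [show (k : ℂ) * Complex.I * (-↑Real.pi) = (-k : ℤ) * (↑Real.pi * Complex.I) by push_cast; ring,
        Complex.exp_int_mul, Complex.exp_pi_mul_I, zpow_neg]
    rw [h1, h2]
    have h3 : ((-1 : ℂ) ^ k)⁻¹ = (-1 : ℂ) ^ k := by
      rcases Int.even_or_odd k with he | ho
      · rw [he.neg_one_zpow]; norm_num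
      · rw [ho.neg_one_zpow]; norm_num
    rw [h3, sub_self, zero_div]

-- radial substitution
lemma radial_int (G : ℝ → ℝ) (n : ℕ) :
    (∫ r in Set.Ioi (0:ℝ), r ^ (2*n+1) * G (r^2)) = (∫ t in Set.Ioi (0:ℝ), t^n * G t) / 2 := by
  rw [← integral_div]
  rw [← integral_comp_rpow_Ioi_of_pos (g := fun t => t ^ n * G t / 2) two_pos]
  refine setIntegral_congr_fun measurableSet_Ioi fun r hr => ?_
  have hr0 : (0:ℝ) < r := hr
  have h1 : r ^ (2:ℝ) = r ^ 2 := by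
    rw [show (2:ℝ) = ((2:ℕ):ℝ) by norm_num, Real.rpow_natCast]
  have h2 : r ^ ((2:ℝ)-1) = r := by
    rw [show (2:ℝ)-1 = 1 by norm_num, Real.rpow_one]
  simp only [smul_eq_mul, h1, h2]
  ring

lemma polar_key (G : ℝ → ℝ) (n m : ℕ) :
    (∫ z : ℂ, (G (‖z‖^2) : ℂ) * z^n * (starRingEnd ℂ) z ^ m)
    = if n = m then ((Real.pi * ∫ t in Set.Ioi (0:ℝ), t^n * G t : ℝ) : ℂ) else 0 := by
  rw [← Complex.integral_comp_polarCoord_symm (fun z => (G (‖z‖^2) : ℂ) * z^n * (starRingEnd ℂ) z ^ m)]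
  rw [show polarCoord.target = Set.Ioi (0:ℝ) ×ˢ Set.Ioo (-Real.pi) Real.pi from rfl]
  have hcongr : Set.EqOn
      (fun p : ℝ × ℝ => p.1 • ((G (‖Complex.polarCoord.symm p‖^2) : ℂ) * (Complex.polarCoord.symm p)^n *
        (starRingEnd ℂ) (Complex.polarCoord.symm p) ^ m))
      (fun p : ℝ × ℝ => ((p.1 ^ (n+m+1) * G (p.1^2) : ℝ) : ℂ) *
        (Complex.exp (↑p.2 * Complex.I)^n * Complex.exp (-(↑p.2 * Complex.I))^m))
      (Set.Ioi (0:ℝ) ×ˢ Set.Ioo (-Real.pi) Real.pi) := by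
    rintro ⟨r, θ⟩ ⟨hr, hθ⟩
    have hr0 : (0:ℝ) < r := hr
    have hz : Complex.polarCoord.symm (r, θ) = ↑r * Complex.exp (↑θ * Complex.I) := by
      rw [Complex.polarCoord_symm_apply, Complex.exp_mul_I, ← Complex.ofReal_cos,
        ← Complex.ofReal_sin]
    have hnorm : ‖(r:ℂ) * Complex.exp (↑θ * Complex.I)‖ = r := by
      rw [norm_mul, Complex.norm_real, Real.norm_eq_abs,
        Complex.norm_exp_ofReal_mul_I, abs_of_pos hr0, mul_one]
    have hconj : (starRingEnd ℂ) ((r:ℂ) * Complex.exp (↑θ * Complex.I))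
        = ↑r * Complex.exp (-(↑θ * Complex.I)) := by
      rw [map_mul, Complex.conj_ofReal, ← Complex.exp_conj, map_mul, Complex.conj_ofReal,
        Complex.conj_I, mul_neg]
    simp only [hz, hnorm, hconj, Complex.real_smul]
    push_cast
    ring
  rw [setIntegral_congr_fun (measurableSet_Ioi.prod measurableSet_Ioo) hcongr]
  rw [Measure.volume_eq_prod,
    setIntegral_prod_mul (fun a : ℝ => ((a ^ (n+m+1) * G (a^2) : ℝ) : ℂ))
      (fun b : ℝ => Complex.exp (↑b * Complex.I) ^ n * Complex.exp (-(↑b * Complex.I)) ^ m)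
      (Set.Ioi (0:ℝ)) (Set.Ioo (-Real.pi) Real.pi), theta_int]
  by_cases h : n = m
  · subst h
    rw [if_pos rfl, if_pos rfl]
    rw [show n + n + 1 = 2*n + 1 by ring]
    rw [show (∫ x in Set.Ioi (0:ℝ), ((x ^ (2*n+1) * G (x^2) : ℝ) : ℂ))
        = ((∫ x in Set.Ioi (0:ℝ), x ^ (2*n+1) * G (x^2) : ℝ) : ℂ) from integral_ofReal,
      radial_int]
    push_cast
    ring
  · rw [if_neg h, if_neg h, mul_zero]

section Null
variable (x : ℕ → ℝ) (w : ℝ → ℝ)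

lemma w_null_above (hpos : ∀ n, 1 ≤ n → 0 < x n) (hw_meas : Measurable w)
    (hw_nonneg : ∀ t, 0 < t → 0 ≤ w t)
    (hw_int : ∀ n : ℕ, IntegrableOn (fun t => t ^ n * w t) (Set.Ioi 0))
    (hw_mom : ∀ n : ℕ, ∫ t in Set.Ioi (0 : ℝ), t ^ n * w t = gfact x n)
    {t0 s : ℝ} (ht0 : 0 < t0) (hns : ¬ Summable (fun k : ℕ => t0 ^ k / gfact x k))
    (hs : t0 < s) : volume {u : ℝ | s < u ∧ w u ≠ 0} = 0 := by
  have gfact_pos : ∀ k, 0 < gfact x k := fun k =>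
    Finset.prod_pos fun i _ => hpos (i + 1) (Nat.le_add_left 1 i)
  have hs0 : 0 < s := ht0.trans hs
  have hwint : IntegrableOn w (Set.Ioi s) := by
    have h0 := hw_int 0
    simp only [pow_zero, one_mul] at h0
    exact h0.mono_set (Set.Ioi_subset_Ioi hs0.le)
  have hW : ∫ u in Set.Ioi s, w u = 0 := by
    by_contra hW
    have hWnn : 0 ≤ ∫ u in Set.Ioi s, w u :=
      setIntegral_nonneg measurableSet_Ioi fun u hu => hw_nonneg u (hs0.trans hu)
    set W := ∫ u in Set.Ioi s, w u with hWdef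
    have hWpos : 0 < W := lt_of_le_of_ne hWnn (Ne.symm hW)
    apply hns
    have key : ∀ k : ℕ, s ^ k * W ≤ gfact x k := by
      intro k
      have e1 : s ^ k * W = ∫ u in Set.Ioi s, s ^ k * w u := by
        rw [integral_const_mul]
      have e2 : (∫ u in Set.Ioi s, s ^ k * w u) ≤ ∫ u in Set.Ioi s, u ^ k * w u := by
        refine setIntegral_mono_on (hwint.const_mul _)
          ((hw_int k).mono_set (Set.Ioi_subset_Ioi hs0.le)) measurableSet_Ioi fun u hu => ?_
        have hu' : s < u := hu
        exact mul_le_mul_of_nonneg_right (pow_le_pow_left₀ hs0.le hu'.le k)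
          (hw_nonneg u (hs0.trans hu'))
      have e3 : (∫ u in Set.Ioi s, u ^ k * w u) ≤ ∫ u in Set.Ioi 0, u ^ k * w u := by
        refine setIntegral_mono_set (hw_int k) ?_ (HasSubset.Subset.eventuallyLE
          (Set.Ioi_subset_Ioi hs0.le))
        filter_upwards [ae_restrict_mem measurableSet_Ioi] with u hu
        exact mul_nonneg (pow_nonneg (le_of_lt hu) _) (hw_nonneg u hu)
      rw [e1]
      exact e2.trans (e3.trans_eq (hw_mom k))
    refine Summable.of_nonneg_of_le
      (fun k => div_nonneg (pow_nonneg ht0.le _) (gfact_pos k).le)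
      (fun k => ?_) (((summable_geometric_of_lt_one (div_nonneg ht0.le hs0.le)
        ((div_lt_one hs0).mpr hs)).div_const W))
    have h1 : t0 ^ k / gfact x k ≤ t0 ^ k / (s ^ k * W) :=
      div_le_div_of_nonneg_left (pow_nonneg ht0.le _)
        (mul_pos (pow_pos hs0 _) hWpos) (key k)
    calc t0 ^ k / gfact x k ≤ t0 ^ k / (s ^ k * W) := h1
      _ = (t0 / s) ^ k / W := by rw [div_pow, div_div]
  have hae : w =ᵐ[volume.restrict (Set.Ioi s)] 0 :=
    (setIntegral_eq_zero_iff_of_nonneg_ae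
      (by filter_upwards [ae_restrict_mem measurableSet_Ioi] with u hu
          exact hw_nonneg u (hs0.trans hu)) hwint).mp hW
  rw [Filter.EventuallyEq, ae_iff] at hae
  rw [Measure.restrict_apply] at hae
  · convert hae using 2
    ext u
    simp only [Set.mem_setOf_eq, Set.mem_inter_iff, Set.mem_Ioi, Pi.zero_apply]
    tauto
  · exact (hw_meas (measurableSet_singleton 0)).compl

lemma w_null_above' (hpos : ∀ n, 1 ≤ n → 0 < x n) (hw_meas : Measurable w)
    (hw_nonneg : ∀ t, 0 < t → 0 ≤ w t)
    (hw_int : ∀ n : ℕ, IntegrableOn (fun t => t ^ n * w t) (Set.Ioi 0))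
    (hw_mom : ∀ n : ℕ, ∫ t in Set.Ioi (0 : ℝ), t ^ n * w t = gfact x n)
    {t0 : ℝ} (ht0 : 0 < t0) (hns : ¬ Summable (fun k : ℕ => t0 ^ k / gfact x k)) :
    volume {u : ℝ | t0 < u ∧ w u ≠ 0} = 0 := by
  set S : ℚ → Set ℝ := fun q =>
    if t0 < (q : ℝ) then {u : ℝ | (q : ℝ) < u ∧ w u ≠ 0} else ∅ with hS
  refine measure_mono_null (t := ⋃ q : ℚ, S q) ?_ (measure_iUnion_null fun q => ?_)
  · rintro u ⟨hu1, hu2⟩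
    obtain ⟨q, hq1, hq2⟩ := exists_rat_btwn hu1
    exact Set.mem_iUnion.mpr ⟨q, by simp only [hS, if_pos hq1]; exact ⟨hq2, hu2⟩⟩
  · simp only [hS]
    split_ifs with h
    · exact w_null_above x w hpos hw_meas hw_nonneg hw_int hw_mom ht0 hns h
    · exact measure_empty

open scoped Classical in
lemma bad_null (hpos : ∀ n, 1 ≤ n → 0 < x n) (hw_meas : Measurable w)
    (hw_nonneg : ∀ t, 0 < t → 0 ≤ w t)
    (hw_int : ∀ n : ℕ, IntegrableOn (fun t => t ^ n * w t) (Set.Ioi 0))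
    (hw_mom : ∀ n : ℕ, ∫ t in Set.Ioi (0 : ℝ), t ^ n * w t = gfact x n) :
    volume {t : ℝ | 0 < t ∧ ¬ Summable (fun k : ℕ => t ^ k / gfact x k) ∧ w t ≠ 0} = 0 := by
  have gfact_pos : ∀ k, 0 < gfact x k := fun k =>
    Finset.prod_pos fun i _ => hpos (i + 1) (Nat.le_add_left 1 i)
  set B : Set ℝ := {t | 0 < t ∧ ¬ Summable (fun k : ℕ => t ^ k / gfact x k)} with hB
  have hup : ∀ a b : ℝ, 0 ≤ a → a ≤ b → ¬ Summable (fun k : ℕ => a ^ k / gfact x k) →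
      ¬ Summable (fun k : ℕ => b ^ k / gfact x k) := by
    intro a b ha hab hnsa hsb
    refine hnsa (Summable.of_nonneg_of_le
      (fun k => div_nonneg (pow_nonneg ha _) (gfact_pos k).le)
      (fun k => ?_) hsb)
    gcongr
    all_goals first | exact (gfact_pos k).le | exact ha | exact hab | exact le_rfl
  set T : ℚ → Set ℝ := fun q =>
    if (0 < (q:ℝ) ∧ ¬ Summable (fun k : ℕ => (q:ℝ) ^ k / gfact x k)) then
      {u : ℝ | (q : ℝ) < u ∧ w u ≠ 0} else ∅ with hT
  refine measure_mono_null (t := {t : ℝ | IsLeast B t} ∪ ⋃ q : ℚ, T q) ?_ ?_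
  · rintro t ⟨ht0, htns, htw⟩
    by_cases hle : ∀ s ∈ B, t ≤ s
    · exact Set.mem_union_left _ ⟨⟨ht0, htns⟩, hle⟩
    · push_neg at hle
      obtain ⟨s, hsB, hst⟩ := hle
      obtain ⟨q, hq1, hq2⟩ := exists_rat_btwn hst
      refine Set.mem_union_right _ (Set.mem_iUnion.mpr ⟨q, ?_⟩)
      have hq0 : (0:ℝ) < q := hsB.1.trans hq1
      have hqns := hup s q hsB.1.le hq1.le hsB.2
      simp only [hT, if_pos (⟨hq0, hqns⟩ : _ ∧ _)]
      exact ⟨hq2, htw⟩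
  · refine measure_union_null ?_ (measure_iUnion_null fun q => ?_)
    · have hsub : {t : ℝ | IsLeast B t}.Subsingleton := fun a ha b hb =>
        le_antisymm (ha.2 hb.1) (hb.2 ha.1)
      rcases hsub.eq_empty_or_singleton with h | ⟨a, h⟩
      · simp [h]
      · simp [h]
    · simp only [hT]
      split_ifs with h
      · exact w_null_above' x w hpos hw_meas hw_nonneg hw_int hw_mom h.1 h.2
      · exact measure_empty

end Null

lemma chi_moment (x : ℕ → ℝ) (w : ℝ → ℝ) (hpos : ∀ n, 1 ≤ n → 0 < x n)
    (hw_meas : Measurable w) (hw_nonneg : ∀ t, 0 < t → 0 ≤ w t)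
    (hw_int : ∀ n : ℕ, IntegrableOn (fun t => t ^ n * w t) (Set.Ioi 0))
    (hw_mom : ∀ n : ℕ, ∫ t in Set.Ioi (0 : ℝ), t ^ n * w t = gfact x n) (n : ℕ) :
    ∫ t in Set.Ioi (0:ℝ), t ^ n * (w t * (gexp x t * ((Real.sqrt (gexp x t))⁻¹) ^ 2))
      = gfact x n := by
  have gfact_pos : ∀ k, 0 < gfact x k := fun k =>
    Finset.prod_pos fun i _ => hpos (i + 1) (Nat.le_add_left 1 i)
  rw [← hw_mom n]
  apply integral_congr_ae
  have h1 : ∀ᵐ t ∂(volume.restrict (Set.Ioi (0:ℝ))), t ∈ Set.Ioi (0:ℝ) :=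
    ae_restrict_mem measurableSet_Ioi
  have h2 : ∀ᵐ t ∂(volume.restrict (Set.Ioi (0:ℝ))),
      ¬(0 < t ∧ ¬ Summable (fun k : ℕ => t ^ k / gfact x k) ∧ w t ≠ 0) := by
    refine ae_restrict_of_ae ?_
    rw [ae_iff]
    simp only [not_not]
    exact bad_null x w hpos hw_meas hw_nonneg hw_int hw_mom
  filter_upwards [h1, h2] with t ht htD
  by_cases hsm : Summable (fun k : ℕ => t ^ k / gfact x k)
  · have ht0 : (0:ℝ) < t := ht
    have hN : 1 ≤ gexp x t := by
      have h0 := Summable.le_tsum hsm 0 (fun j _ =>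
        div_nonneg (pow_nonneg ht0.le _) (gfact_pos j).le)
      simpa [gfact, gexp] using h0
    have hNpos : 0 < gexp x t := lt_of_lt_of_le one_pos hN
    have hone : gexp x t * ((Real.sqrt (gexp x t))⁻¹) ^ 2 = 1 := by
      rw [inv_pow, Real.sq_sqrt hNpos.le, mul_inv_cancel₀ hNpos.ne']
    rw [hone, mul_one]
  · have hw0 : w t = 0 := by
      by_contra hw0
      exact htD ⟨ht, hsm, hw0⟩
    rw [hw0]
    ring

/-- If `w` solves the Stieltjes moment problem for the generalized
factorials, i.e. `∫₀^∞ tⁿ w(t) dt = xₙ!`, then for all `n m`: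
`(1/π) ∫_ℂ w(|z|²) zⁿ (conj z)ᵐ dA(z) = δ_{n,m} xₙ!`, and consequently the
coherent states `v_z = N(|z|²)^{-1/2} Σ zⁿ/√(xₙ!) eₙ` resolve the identity on
`ℓ²(ℕ,ℂ)` with respect to `w(|z|²) N(|z|²) dA(z)/π`, in matrix-element form. -/
theorem stmt_3 (x : ℕ → ℝ) (hx0 : x 0 = 0) (hpos : ∀ n, 1 ≤ n → 0 < x n)
    (w : ℝ → ℝ) (hw_meas : Measurable w) (hw_nonneg : ∀ t, 0 < t → 0 ≤ w t)
    (hw_int : ∀ n : ℕ, IntegrableOn (fun t => t ^ n * w t) (Set.Ioi 0))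
    (hw_mom : ∀ n : ℕ, ∫ t in Set.Ioi (0 : ℝ), t ^ n * w t = gfact x n) :
    (∀ n m : ℕ,
      (1 / (Real.pi : ℂ)) *
          ∫ z : ℂ, (w (‖z‖ ^ 2) : ℂ) * z ^ n * (starRingEnd ℂ) z ^ m =
        if n = m then (gfact x n : ℂ) else 0) ∧
    (∀ n m : ℕ,
      (1 / (Real.pi : ℂ)) *
          ∫ z : ℂ, ((w (‖z‖ ^ 2) * gexp x (‖z‖ ^ 2) : ℝ) : ℂ) *
            (gcoh x z n * (starRingEnd ℂ) (gcoh x z m)) =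
        if n = m then 1 else 0) := by
  have gfact_pos : ∀ k, 0 < gfact x k := fun k =>
    Finset.prod_pos fun i _ => hpos (i + 1) (Nat.le_add_left 1 i)
  constructor
  · intro n m
    rw [polar_key w n m]
    by_cases h : n = m
    · rw [if_pos h, if_pos h]
      subst h
      rw [hw_mom n]
      rw [Complex.ofReal_mul, ← mul_assoc, one_div, inv_mul_cancel₀, one_mul]
      exact_mod_cast Complex.ofReal_ne_zero.mpr Real.pi_ne_zero
    · rw [if_neg h, if_neg h, mul_zero]
  · intro n m
    set G2 : ℝ → ℝ := fun t =>
      w t * gexp x t * ((Real.sqrt (gexp x t))⁻¹) ^ 2 /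
        (Real.sqrt (gfact x n) * Real.sqrt (gfact x m)) with hG2
    have hinteq : ∀ z : ℂ,
        ((w (‖z‖ ^ 2) * gexp x (‖z‖ ^ 2) : ℝ) : ℂ) *
          (gcoh x z n * (starRingEnd ℂ) (gcoh x z m))
        = (G2 (‖z‖ ^ 2) : ℂ) * z ^ n * (starRingEnd ℂ) z ^ m := by
      intro z
      simp only [gcoh, hG2, map_mul, map_div₀, map_inv₀, map_pow, Complex.conj_ofReal]
      push_cast
      ring
    rw [show (∫ z : ℂ, ((w (‖z‖ ^ 2) * gexp x (‖z‖ ^ 2) : ℝ) : ℂ) *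
          (gcoh x z n * (starRingEnd ℂ) (gcoh x z m)))
        = ∫ z : ℂ, (G2 (‖z‖ ^ 2) : ℂ) * z ^ n * (starRingEnd ℂ) z ^ m from
      integral_congr_ae (Filter.Eventually.of_forall hinteq)]
    rw [polar_key G2 n m]
    by_cases h : n = m
    · rw [if_pos h, if_pos h]
      subst h
      have hval : (∫ t in Set.Ioi (0:ℝ), t ^ n * G2 t) = 1 := by
        have : ∀ t : ℝ, t ^ n * G2 t =
            (t ^ n * (w t * (gexp x t * ((Real.sqrt (gexp x t))⁻¹) ^ 2))) / gfact x n := by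
          intro t
          have hss : Real.sqrt (gfact x n) * Real.sqrt (gfact x n) = gfact x n :=
            Real.mul_self_sqrt (gfact_pos n).le
          rw [hG2]
          simp only
          rw [hss]
          ring
        simp only [this]
        rw [integral_div, chi_moment x w hpos hw_meas hw_nonneg hw_int hw_mom n,
          div_self (gfact_pos n).ne']
      rw [hval]
      rw [Complex.ofReal_mul, ← mul_assoc, one_div, inv_mul_cancel₀, one_mul,
        Complex.ofReal_one]
      exact_mod_cast Complex.ofReal_ne_zero.mpr Real.pi_ne_zero
    · rw [if_neg h, if_neg h, mul_zero]
end

section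
/- Let (x_n)_{n∈ℕ} satisfy x_0 = 0, x_n > 0 for n ≥ 1, lim x_n = ∞, with exponential N(t) = Σ t^n/x_n!, and assume that all the moment integrals 𝓘(n) := ∫₀^∞ t^n / N(t) dt are finite. Set μ_n := 𝓘(n)/x_n! and define the renormalized factorials x̃_n! := (μ_n/μ_0) x_n!. Then for all n, m ∈ ℕ: (1/(μ_0 π)) ∫_ℂ z^n (conj z)^m / N(|z|²) dA(z) = δ_{n,m} · x̃_n!. Consequently the renormalized coherent states ṽ_z = Ñ(|z|²)^{−1/2} Σ_n (z^n/√(x̃_n!)) e_n resolve the identity on ℓ²(ℕ,ℂ) with respect to the measure ν(dz) = (Ñ(|z|²)/N(|z|²)) dA(z)/(μ_0 π), where Ñ(t) = Σ_n t^n/x̃_n!. -/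
open MeasureTheory

/-- The moment integrals `𝓘(n) = ∫₀^∞ tⁿ / N(t) dt`. -/
noncomputable def momI (x : ℕ → ℝ) (n : ℕ) : ℝ := ∫ t in Set.Ioi (0 : ℝ), t ^ n / gexp x t

/-- The ratios `μₙ = 𝓘(n)/xₙ!`. -/
noncomputable def mu (x : ℕ → ℝ) (n : ℕ) : ℝ := momI x n / gfact x n

/-- The renormalized factorials `x̃ₙ! = (μₙ/μ₀) xₙ!`. -/
noncomputable def tfact (x : ℕ → ℝ) (n : ℕ) : ℝ := (mu x n / mu x 0) * gfact x n

/-- The renormalized exponential `Ñ(t) = Σ tⁿ/x̃ₙ!`. -/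
noncomputable def texp (x : ℕ → ℝ) (t : ℝ) : ℝ := ∑' n : ℕ, t ^ n / tfact x n

/-- The renormalized coherent state coefficients
`(e_n , ṽ_z) = Ñ(|z|²)^{-1/2} zⁿ/√(x̃ₙ!)`. -/
noncomputable def tcoh (x : ℕ → ℝ) (z : ℂ) (n : ℕ) : ℂ :=
  (Real.sqrt (texp x (‖z‖ ^ 2)))⁻¹ * z ^ n / Real.sqrt (tfact x n)

namespace Stmt4

open Set Filter Real

variable {x : ℕ → ℝ}

lemma gfact_pos (hpos : ∀ n, 1 ≤ n → 0 < x n) (n : ℕ) : 0 < gfact x n :=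
  Finset.prod_pos fun k _ => hpos _ (Nat.le_add_left 1 k)

lemma gfact_zero : gfact x 0 = 1 := Finset.prod_range_zero _

lemma summable_gexp (hpos : ∀ n, 1 ≤ n → 0 < x n) (hlim : Tendsto x atTop atTop)
    {t : ℝ} (ht : 0 ≤ t) : Summable fun n => t ^ n / gfact x n := by
  apply summable_of_ratio_norm_eventually_le (r := 1 / 2) (by norm_num)
  obtain ⟨N, hN⟩ := eventually_atTop.mp (hlim.eventually_ge_atTop (2 * t + 1))
  rw [eventually_atTop]
  refine ⟨N, fun n hn => ?_⟩
  have hx1 : 2 * t + 1 ≤ x (n + 1) := hN _ (hn.trans (Nat.le_succ n))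
  have hxp : 0 < x (n + 1) := hpos _ (Nat.le_add_left 1 n)
  have hg : 0 < gfact x n := gfact_pos hpos n
  have hg1 : 0 < gfact x (n + 1) := gfact_pos hpos (n + 1)
  have hg' : gfact x (n + 1) = gfact x n * x (n + 1) := Finset.prod_range_succ _ _
  rw [Real.norm_eq_abs, Real.norm_eq_abs, abs_of_nonneg (by positivity),
    abs_of_nonneg (by positivity)]
  have h1 : t ^ (n + 1) / gfact x (n + 1) = (t / x (n + 1)) * (t ^ n / gfact x n) := by
    rw [hg', pow_succ]; field_simp
  rw [h1]
  have h2 : t / x (n + 1) ≤ 1 / 2 := by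
    rw [div_le_div_iff₀ hxp (by norm_num)]; linarith
  exact mul_le_mul_of_nonneg_right h2 (by positivity)

lemma one_le_gexp (hpos : ∀ n, 1 ≤ n → 0 < x n) (hlim : Tendsto x atTop atTop)
    {t : ℝ} (ht : 0 ≤ t) : 1 ≤ gexp x t := by
  have hs := summable_gexp hpos hlim ht
  have h0 : t ^ 0 / gfact x 0 = 1 := by simp [gfact_zero]
  calc (1:ℝ) = t ^ 0 / gfact x 0 := h0.symm
    _ ≤ gexp x t := Summable.le_tsum hs 0 fun n _ =>
        div_nonneg (pow_nonneg ht n) (gfact_pos hpos n).le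

lemma gexp_pos (hpos : ∀ n, 1 ≤ n → 0 < x n) (hlim : Tendsto x atTop atTop)
    {t : ℝ} (ht : 0 ≤ t) : 0 < gexp x t :=
  lt_of_lt_of_le one_pos (one_le_gexp hpos hlim ht)

lemma gexp_mono (hpos : ∀ n, 1 ≤ n → 0 < x n) (hlim : Tendsto x atTop atTop)
    {s t : ℝ} (hs : 0 ≤ s) (hst : s ≤ t) : gexp x s ≤ gexp x t := by
  refine Summable.tsum_le_tsum (fun n => ?_) (summable_gexp hpos hlim hs)
    (summable_gexp hpos hlim (hs.trans hst))
  have := gfact_pos hpos n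
  gcongr

lemma momI_pos (hpos : ∀ n, 1 ≤ n → 0 < x n) (hlim : Tendsto x atTop atTop)
    (hint : ∀ n : ℕ, IntegrableOn (fun t => t ^ n / gexp x t) (Set.Ioi 0)) (n : ℕ) :
    0 < momI x n := by
  rw [momI, setIntegral_pos_iff_support_of_nonneg_ae]
  · refine lt_of_lt_of_le ?_ (measure_mono (?_ : Ioi (0:ℝ) ⊆ _))
    · simp [Real.volume_Ioi]
    · intro t ht
      refine ⟨?_, ht⟩
      have h1 : 0 < t ^ n / gexp x t :=
        div_pos (pow_pos ht n) (gexp_pos hpos hlim (le_of_lt ht))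
      exact Function.mem_support.mpr h1.ne'
  · rw [EventuallyLE, ae_restrict_iff' measurableSet_Ioi]
    exact Eventually.of_forall fun t ht =>
      div_nonneg (pow_nonneg (le_of_lt ht) n) (gexp_pos hpos hlim (le_of_lt ht)).le
  · exact hint n

lemma momI_ge (hpos : ∀ n, 1 ≤ n → 0 < x n) (hlim : Tendsto x atTop atTop)
    (hint : ∀ n : ℕ, IntegrableOn (fun t => t ^ n / gexp x t) (Set.Ioi 0)) (n : ℕ)
    {B : ℝ} (hB : 0 < B) :
    B ^ (n + 1) / ((n + 1) * gexp x B) ≤ momI x n := by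
  have hNB : 0 < gexp x B := gexp_pos hpos hlim hB.le
  have h2 : (∫ t in Ioc (0:ℝ) B, t ^ n / gexp x B) = B ^ (n + 1) / ((n + 1) * gexp x B) := by
    rw [integral_div, ← intervalIntegral.integral_of_le hB.le, integral_pow]
    rw [div_div]
    norm_num
  have h1 : (∫ t in Ioc (0:ℝ) B, t ^ n / gexp x B) ≤ ∫ t in Ioc (0:ℝ) B, t ^ n / gexp x t := by
    refine setIntegral_mono_on ?_ ((hint n).mono_set Ioc_subset_Ioi_self) measurableSet_Ioc ?_
    · exact ((continuous_pow n).div_const (gexp x B)).integrableOn_Ioc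
    · intro t ht
      have h3 : 0 < gexp x t := gexp_pos hpos hlim ht.1.le
      exact div_le_div_of_nonneg_left (pow_nonneg ht.1.le n) h3
        (gexp_mono hpos hlim ht.1.le ht.2)
  have h4 : (∫ t in Ioc (0:ℝ) B, t ^ n / gexp x t) ≤ momI x n := by
    refine setIntegral_mono_set (hint n) ?_ (HasSubset.Subset.eventuallyLE Ioc_subset_Ioi_self)
    rw [EventuallyLE, ae_restrict_iff' measurableSet_Ioi]
    exact Eventually.of_forall fun t ht =>
      div_nonneg (pow_nonneg (le_of_lt ht) n) (gexp_pos hpos hlim (le_of_lt ht)).le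
  calc B ^ (n + 1) / ((n + 1) * gexp x B) = _ := h2.symm
    _ ≤ _ := h1
    _ ≤ _ := h4

lemma tfact_eq (hpos : ∀ n, 1 ≤ n → 0 < x n) (n : ℕ) :
    tfact x n = momI x n / momI x 0 := by
  have hg : gfact x n ≠ 0 := (gfact_pos hpos n).ne'
  rw [tfact, mu, mu, gfact_zero, div_one]
  field_simp

lemma tfact_pos (hpos : ∀ n, 1 ≤ n → 0 < x n) (hlim : Tendsto x atTop atTop)
    (hint : ∀ n : ℕ, IntegrableOn (fun t => t ^ n / gexp x t) (Set.Ioi 0)) (n : ℕ) :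
    0 < tfact x n := by
  rw [tfact_eq hpos n]
  exact div_pos (momI_pos hpos hlim hint n) (momI_pos hpos hlim hint 0)

lemma tfact_zero (hpos : ∀ n, 1 ≤ n → 0 < x n) (hlim : Tendsto x atTop atTop)
    (hint : ∀ n : ℕ, IntegrableOn (fun t => t ^ n / gexp x t) (Set.Ioi 0)) :
    tfact x 0 = 1 := by
  rw [tfact_eq hpos 0, div_self (momI_pos hpos hlim hint 0).ne']

lemma summable_texp (hpos : ∀ n, 1 ≤ n → 0 < x n) (hlim : Tendsto x atTop atTop)
    (hint : ∀ n : ℕ, IntegrableOn (fun t => t ^ n / gexp x t) (Set.Ioi 0))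
    {t : ℝ} (ht : 0 ≤ t) : Summable fun n => t ^ n / tfact x n := by
  rcases eq_or_lt_of_le ht with h0 | h0
  · refine summable_of_ne_finset_zero (s := {0}) fun n hn => ?_
    have : n ≠ 0 := by simpa using hn
    rw [← h0, zero_pow this, zero_div]
  · have hs : Summable fun n : ℕ =>
        (momI x 0 * gexp x (2 * t) / (2 * t)) * (((n : ℝ) + 1) * (1 / 2) ^ n) := by
      apply Summable.mul_left
      have h1 : Summable fun n : ℕ => (n : ℝ) * (1 / 2) ^ n := by
        simpa using summable_pow_mul_geometric_of_norm_lt_one (R := ℝ) 1 (r := 1/2) (by norm_num)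
      have h2 : Summable fun n : ℕ => ((1:ℝ) / 2) ^ n :=
        summable_geometric_of_lt_one (by norm_num) (by norm_num)
      simpa [add_mul, one_mul] using h1.add h2
    refine Summable.of_nonneg_of_le
      (fun n => div_nonneg (pow_nonneg ht n) (tfact_pos hpos hlim hint n).le) (fun n => ?_) hs
    have h2t : 0 < 2 * t := by linarith
    have hlow := momI_ge hpos hlim hint n h2t
    have hL : 0 < (2 * t) ^ (n + 1) / ((n + 1) * gexp x (2 * t)) :=
      div_pos (pow_pos h2t _)
        (mul_pos (by positivity) (gexp_pos hpos hlim h2t.le))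
    have hmom0 := momI_pos hpos hlim hint 0
    have hmomn := momI_pos hpos hlim hint n
    rw [tfact_eq hpos n, div_div_eq_mul_div]
    have step1 : t ^ n * momI x 0 / momI x n ≤
        t ^ n * momI x 0 / ((2 * t) ^ (n + 1) / ((n + 1) * gexp x (2 * t))) := by
      gcongr
    refine step1.trans (le_of_eq ?_)
    have hgB : 0 < gexp x (2 * t) := gexp_pos hpos hlim h2t.le
    have hn1 : ((n : ℝ) + 1) ≠ 0 := by positivity
    have ht0 : t ≠ 0 := h0.ne'
    rw [div_div_eq_mul_div, mul_pow, pow_succ, pow_succ]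
    field_simp
    ring
    rw [← mul_pow]; norm_num

lemma one_le_texp (hpos : ∀ n, 1 ≤ n → 0 < x n) (hlim : Tendsto x atTop atTop)
    (hint : ∀ n : ℕ, IntegrableOn (fun t => t ^ n / gexp x t) (Set.Ioi 0))
    {t : ℝ} (ht : 0 ≤ t) : 1 ≤ texp x t := by
  have hs := summable_texp hpos hlim hint ht
  have h0 : t ^ 0 / tfact x 0 = 1 := by simp [tfact_zero hpos hlim hint]
  calc (1:ℝ) = t ^ 0 / tfact x 0 := h0.symm
    _ ≤ texp x t := Summable.le_tsum hs 0 fun n _ =>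
        div_nonneg (pow_nonneg ht n) (tfact_pos hpos hlim hint n).le

lemma key_integral (hpos : ∀ n, 1 ≤ n → 0 < x n) (hlim : Tendsto x atTop atTop)
    (hint : ∀ n : ℕ, IntegrableOn (fun t => t ^ n / gexp x t) (Set.Ioi 0)) (n m : ℕ) :
    (∫ z : ℂ, z ^ n * (starRingEnd ℂ) z ^ m / (gexp x (‖z‖ ^ 2) : ℂ))
      = if n = m then ((Real.pi * momI x n : ℝ) : ℂ) else 0 := by
  have h1 : (∫ z : ℂ, z ^ n * (starRingEnd ℂ) z ^ m / (gexp x (‖z‖ ^ 2) : ℂ))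
      = (∫ r in Ioi (0:ℝ), ((r:ℂ) ^ (n + m + 1) / (gexp x (r ^ 2) : ℂ))) *
        ∫ θ in Ioo (-π) π, Complex.exp ((((n:ℝ) - m : ℝ) : ℂ) * θ * Complex.I) := by
    rw [← Complex.integral_comp_polarCoord_symm, polarCoord_target, Measure.volume_eq_prod,
      ← setIntegral_prod_mul]
    refine setIntegral_congr_fun (measurableSet_Ioi.prod measurableSet_Ioo) ?_
    rintro ⟨r, θ⟩ ⟨hr, hθ⟩
    simp only [Complex.polarCoord_symm_apply]
    have he : ((Real.cos θ : ℂ) + (Real.sin θ : ℂ) * Complex.I)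
        = Complex.exp ((θ : ℂ) * Complex.I) := by
      rw [Complex.exp_mul_I, Complex.ofReal_cos, Complex.ofReal_sin]
    rw [he]
    have hr0 : (0:ℝ) < r := hr
    have hnorm : ‖((r:ℂ) * Complex.exp ((θ:ℂ) * Complex.I))‖ = r := by
      rw [norm_mul, Complex.norm_real, Real.norm_eq_abs,
        Complex.norm_exp_ofReal_mul_I, mul_one, abs_of_pos hr0]
    have hconj : (starRingEnd ℂ) ((r:ℂ) * Complex.exp ((θ:ℂ) * Complex.I))
        = (r:ℂ) * Complex.exp (-((θ:ℂ) * Complex.I)) := by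
      rw [map_mul, Complex.conj_ofReal, ← Complex.exp_conj, map_mul, Complex.conj_ofReal,
        Complex.conj_I, mul_neg]
    rw [hnorm, hconj]
    have hexp : Complex.exp ((θ:ℂ) * Complex.I) ^ n * Complex.exp (-((θ:ℂ) * Complex.I)) ^ m
        = Complex.exp ((((n:ℝ) - m : ℝ) : ℂ) * θ * Complex.I) := by
      rw [← Complex.exp_nat_mul, ← Complex.exp_nat_mul, ← Complex.exp_add]
      congr 1
      push_cast
      ring
    have hN : (gexp x (r ^ 2) : ℂ) ≠ 0 := by
      exact_mod_cast (gexp_pos hpos hlim (sq_nonneg r)).ne'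
    rw [← hexp, mul_pow, mul_pow, Complex.real_smul]
    field_simp
    ring
  rw [h1]
  by_cases hnm : n = m
  · subst hnm
    have hang : (∫ θ in Ioo (-π) π, Complex.exp ((((n:ℝ) - n : ℝ) : ℂ) * θ * Complex.I))
        = ((2 * π : ℝ) : ℂ) := by
      simp only [sub_self, Complex.ofReal_zero, zero_mul, Complex.exp_zero]
      simp [Real.volume_Ioo, two_mul, ENNReal.toReal_ofReal Real.pi_pos.le,
        Real.pi_pos.le]
    have hrad : (∫ r in Ioi (0:ℝ), ((r:ℂ) ^ (n + n + 1) / (gexp x (r ^ 2) : ℂ)))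
        = ((momI x n : ℝ) : ℂ) / 2 := by
      have hsub := integral_comp_rpow_Ioi (fun t => ((t ^ n / gexp x t : ℝ) : ℂ))
        (p := 2) two_ne_zero
      beta_reduce at hsub
      have hco : (∫ y in Ioi (0:ℝ), ((y ^ n / gexp x y : ℝ) : ℂ)) = ((momI x n : ℝ) : ℂ) := by
        rw [momI]; exact integral_ofReal
      rw [hco] at hsub
      have hLHS : (∫ r in Ioi (0:ℝ), ((|2| * r ^ ((2:ℝ) - 1)) •
            (fun t => ((t ^ n / gexp x t : ℝ) : ℂ)) (r ^ (2:ℝ))))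
          = ∫ r in Ioi (0:ℝ), (2:ℂ) * ((r:ℂ) ^ (n + n + 1) / (gexp x (r ^ 2) : ℂ)) := by
        refine setIntegral_congr_fun measurableSet_Ioi (fun r hr => ?_)
        have hr0 : (0:ℝ) < r := hr
        have hrp : r ^ (2:ℝ) = r ^ 2 := by
          rw [show (2:ℝ) = ((2:ℕ):ℝ) by norm_num, Real.rpow_natCast]
        have h21 : r ^ ((2:ℝ) - 1) = r := by
          norm_num
        simp only [hrp, h21]
        rw [Complex.real_smul]
        push_cast
        have hN : (gexp x (r ^ 2) : ℂ) ≠ 0 := by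
          exact_mod_cast (gexp_pos hpos hlim (sq_nonneg r)).ne'
        field_simp
        push_cast
        norm_num; ring
      rw [hLHS, integral_const_mul] at hsub
      rw [eq_div_iff (two_ne_zero), mul_comm]
      exact hsub
    rw [if_pos rfl, hang, hrad]
    push_cast
    ring
  · rw [if_neg hnm]
    have hc : ((((n:ℝ) - m : ℝ) : ℂ)) * Complex.I ≠ 0 := by
      refine mul_ne_zero ?_ Complex.I_ne_zero
      simp only [ne_eq, Complex.ofReal_eq_zero, sub_eq_zero]
      exact_mod_cast hnm
    have hang : (∫ θ in Ioo (-π) π, Complex.exp ((((n:ℝ) - m : ℝ) : ℂ) * θ * Complex.I))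
        = 0 := by
      rw [← integral_Ioc_eq_integral_Ioo,
        ← intervalIntegral.integral_of_le (by linarith [Real.pi_pos] : -π ≤ π)]
      have hcomm : ∀ θ : ℝ, (((n:ℝ) - m : ℝ) : ℂ) * θ * Complex.I
          = ((((n:ℝ) - m : ℝ) : ℂ) * Complex.I) * θ := fun θ => by ring
      simp_rw [hcomm]
      rw [integral_exp_mul_complex hc]
      rw [div_eq_zero_iff]
      left
      rw [sub_eq_zero, Complex.exp_eq_exp_iff_exists_int]
      exact ⟨(n : ℤ) - m, by push_cast; ring⟩
    rw [hang, mul_zero]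

end Stmt4

/-- With finite moments `𝓘(n) = ∫₀^∞ tⁿ/N(t) dt`, `μₙ = 𝓘(n)/xₙ!`
and `x̃ₙ! = (μₙ/μ₀) xₙ!`, for all `n m`:
`(1/(μ₀π)) ∫_ℂ zⁿ (conj z)ᵐ / N(|z|²) dA(z) = δ_{n,m} x̃ₙ!`, and consequently the
renormalized coherent states resolve the identity with respect to
`ν(dz) = (Ñ(|z|²)/N(|z|²)) dA(z)/(μ₀π)`, in matrix-element form. -/
theorem stmt_4 (x : ℕ → ℝ) (hx0 : x 0 = 0) (hpos : ∀ n, 1 ≤ n → 0 < x n)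
    (hlim : Filter.Tendsto x Filter.atTop Filter.atTop)
    (hint : ∀ n : ℕ, IntegrableOn (fun t => t ^ n / gexp x t) (Set.Ioi 0)) :
    (∀ n m : ℕ,
      (1 / ((mu x 0 * Real.pi : ℝ) : ℂ)) *
          ∫ z : ℂ, z ^ n * (starRingEnd ℂ) z ^ m / (gexp x (‖z‖ ^ 2) : ℂ) =
        if n = m then (tfact x n : ℂ) else 0) ∧
    (∀ n m : ℕ,
      (1 / ((mu x 0 * Real.pi : ℝ) : ℂ)) *
          ∫ z : ℂ, ((texp x (‖z‖ ^ 2) / gexp x (‖z‖ ^ 2) : ℝ) : ℂ) *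
            (tcoh x z n * (starRingEnd ℂ) (tcoh x z m)) =
        if n = m then 1 else 0) := by
  have hmu0 : mu x 0 = momI x 0 := by rw [mu, Stmt4.gfact_zero, div_one]
  have hmom0 : 0 < momI x 0 := Stmt4.momI_pos hpos hlim hint 0
  have P1 : ∀ n m : ℕ, (1 / ((mu x 0 * Real.pi : ℝ) : ℂ)) *
      (∫ z : ℂ, z ^ n * (starRingEnd ℂ) z ^ m / (gexp x (‖z‖ ^ 2) : ℂ)) =
      if n = m then (tfact x n : ℂ) else 0 := by
    intro n m
    rw [Stmt4.key_integral hpos hlim hint n m]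
    by_cases h : n = m
    · subst h
      rw [if_pos rfl, if_pos rfl, Stmt4.tfact_eq hpos n, hmu0]
      have h1 : ((momI x 0 : ℝ) : ℂ) ≠ 0 := by exact_mod_cast hmom0.ne'
      have h2 : ((Real.pi : ℝ) : ℂ) ≠ 0 := by exact_mod_cast Real.pi_pos.ne'
      push_cast
      field_simp
    · rw [if_neg h, if_neg h, mul_zero]
  refine ⟨P1, fun n m => ?_⟩
  have htf : ∀ k, 0 < tfact x k := Stmt4.tfact_pos hpos hlim hint
  have hpt : ∀ z : ℂ,
      ((texp x (‖z‖ ^ 2) / gexp x (‖z‖ ^ 2) : ℝ) : ℂ) *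
        (tcoh x z n * (starRingEnd ℂ) (tcoh x z m)) =
      (((Real.sqrt (tfact x n) * Real.sqrt (tfact x m))⁻¹ : ℝ) : ℂ) *
        (z ^ n * (starRingEnd ℂ) z ^ m / (gexp x (‖z‖ ^ 2) : ℂ)) := by
    intro z
    have hT : (0:ℝ) ≤ ‖z‖ ^ 2 := sq_nonneg _
    have hTp : 0 < texp x (‖z‖ ^ 2) :=
      lt_of_lt_of_le one_pos (Stmt4.one_le_texp hpos hlim hint hT)
    have hgp : 0 < gexp x (‖z‖ ^ 2) := Stmt4.gexp_pos hpos hlim hT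
    have hsn : 0 < Real.sqrt (tfact x n) := Real.sqrt_pos.mpr (htf n)
    have hsm : 0 < Real.sqrt (tfact x m) := Real.sqrt_pos.mpr (htf m)
    rw [tcoh, tcoh]
    set s := Real.sqrt (texp x (‖z‖ ^ 2)) with hs
    have ha : 0 < s := Real.sqrt_pos.mpr hTp
    have ha2 : s * s = texp x (‖z‖ ^ 2) := Real.mul_self_sqrt hTp.le
    rw [← ha2]
    simp only [map_div₀, map_mul, map_inv₀, map_pow, Complex.conj_ofReal]
    push_cast
    have h1 : ((s : ℝ) : ℂ) ≠ 0 := by exact_mod_cast ha.ne'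
    have h2 : ((Real.sqrt (tfact x n) : ℝ) : ℂ) ≠ 0 := by exact_mod_cast hsn.ne'
    have h3 : ((Real.sqrt (tfact x m) : ℝ) : ℂ) ≠ 0 := by exact_mod_cast hsm.ne'
    have h4 : ((gexp x (‖z‖ ^ 2) : ℝ) : ℂ) ≠ 0 := by exact_mod_cast hgp.ne'
    have h5 : ((s:ℂ)) ^ 2 * ((s:ℂ))⁻¹ ^ 2 = 1 := by
      rw [inv_pow]
      exact mul_inv_cancel₀ (pow_ne_zero 2 h1)
    field_simp
  simp_rw [hpt]
  rw [integral_const_mul, mul_left_comm, P1 n m]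
  by_cases h : n = m
  · subst h
    rw [if_pos rfl, if_pos rfl, Real.mul_self_sqrt (htf n).le]
    norm_cast
    exact inv_mul_cancel₀ (htf n).ne'
  · rw [if_neg h, if_neg h, mul_zero]
end

section
/- In the setting of the renormalized coherent-state quantization (finite moments 𝓘(n) = ∫₀^∞ t^n/N(t) dt, μ_n = 𝓘(n)/x_n!, x̃_n! = (μ_n/μ_0) x_n!, and x̃_n := x̃_n!/x̃_{n−1}!), the Berezin–Klauder–Toeplitz quantization of the function f(z) = z is the lowering operator: its matrix elements satisfy, for all n, m ∈ ℕ, (1/(μ_0 π √(x̃_n! x̃_m!))) ∫_ℂ z · z^n (conj z)^m / N(|z|²) dA(z) = √(x̃_{n+1}) · δ_{m, n+1}. -/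
open MeasureTheory

lemma gfact_pos (x : ℕ → ℝ) (hpos : ∀ n, 1 ≤ n → 0 < x n) (n : ℕ) : 0 < gfact x n :=
  Finset.prod_pos fun k _ => hpos _ (Nat.le_add_left 1 k)

lemma gexp_summable (x : ℕ → ℝ) (hpos : ∀ n, 1 ≤ n → 0 < x n)
    (hlim : Filter.Tendsto x Filter.atTop Filter.atTop) {t : ℝ} (ht : 0 ≤ t) :
    Summable (fun n => t ^ n / gfact x n) := by
  apply summable_of_ratio_norm_eventually_le (r := t / (2 * t + 1))
  · rw [div_lt_one (by linarith)]; linarith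
  · have hev : ∀ᶠ n in Filter.atTop, 2 * t + 1 ≤ x (n + 1) :=
      (hlim.comp (Filter.tendsto_add_atTop_nat 1)).eventually_ge_atTop _
    filter_upwards [hev] with n hn
    have hx : 0 < x (n + 1) := hpos _ (Nat.le_add_left 1 n)
    have hgf := gfact_pos x hpos n
    have hgf' := gfact_pos x hpos (n + 1)
    have hfs : gfact x (n + 1) = gfact x n * x (n + 1) := Finset.prod_range_succ _ _
    have key : t ^ (n + 1) / gfact x (n + 1) = (t / x (n + 1)) * (t ^ n / gfact x n) := by
      rw [hfs, pow_succ]; field_simp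
    rw [Real.norm_eq_abs, Real.norm_eq_abs,
      abs_of_nonneg (div_nonneg (pow_nonneg ht _) hgf'.le),
      abs_of_nonneg (div_nonneg (pow_nonneg ht _) hgf.le), key]
    have h1 : t / x (n + 1) ≤ t / (2 * t + 1) := by
      apply div_le_div_of_nonneg_left ht (by linarith) hn
    exact mul_le_mul_of_nonneg_right h1 (div_nonneg (pow_nonneg ht _) hgf.le)

lemma gexp_ge_one (x : ℕ → ℝ) (hpos : ∀ n, 1 ≤ n → 0 < x n)
    (hlim : Filter.Tendsto x Filter.atTop Filter.atTop) {t : ℝ} (ht : 0 ≤ t) :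
    1 ≤ gexp x t := by
  have hs := gexp_summable x hpos hlim ht
  have h0 : (1 : ℝ) = t ^ 0 / gfact x 0 := by simp [gfact]
  rw [gexp, h0]
  exact Summable.le_tsum hs 0 fun i _ =>
    div_nonneg (pow_nonneg ht _) (gfact_pos x hpos i).le

lemma momI_pos (x : ℕ → ℝ) (hpos : ∀ n, 1 ≤ n → 0 < x n)
    (hlim : Filter.Tendsto x Filter.atTop Filter.atTop)
    (hint : ∀ n : ℕ, IntegrableOn (fun t => t ^ n / gexp x t) (Set.Ioi 0)) (n : ℕ) :
    0 < momI x n := by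
  rw [momI]
  rw [setIntegral_pos_iff_support_of_nonneg_ae ?_ (hint n)]
  · refine lt_of_lt_of_le ?_ (measure_mono (s := Set.Ioi (0:ℝ)) ?_)
    · rw [Real.volume_Ioi]; exact ENNReal.zero_lt_top
    · intro t ht
      refine ⟨?_, ht⟩
      have h1 : (0:ℝ) < t := ht
      have h2 := gexp_ge_one x hpos hlim h1.le
      simp only [Function.mem_support]
      positivity
  · rw [Filter.EventuallyLE, ae_restrict_iff' measurableSet_Ioi]
    refine ae_of_all _ fun t ht => ?_
    have h1 : (0:ℝ) < t := ht
    have h2 := gexp_ge_one x hpos hlim h1.le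
    positivity

lemma integral_diag (x : ℕ → ℝ) (n : ℕ) :
    (∫ z : ℂ, z * z ^ n * (starRingEnd ℂ) z ^ (n + 1) / (gexp x (‖z‖ ^ 2) : ℂ)) =
      ((Real.pi * momI x (n + 1) : ℝ) : ℂ) := by
  have h1 : ∀ z : ℂ, z * z ^ n * (starRingEnd ℂ) z ^ (n + 1) / (gexp x (‖z‖ ^ 2) : ℂ)
      = (((‖z‖ ^ 2) ^ (n + 1) / gexp x (‖z‖ ^ 2) : ℝ) : ℂ) := by
    intro z
    have h2 : z * z ^ n * (starRingEnd ℂ) z ^ (n + 1)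
        = (z * (starRingEnd ℂ) z) ^ (n + 1) := by ring
    rw [h2, Complex.mul_conj, Complex.normSq_eq_norm_sq]
    push_cast
    ring
  simp_rw [h1]
  rw [show (∫ z : ℂ, (((‖z‖ ^ 2) ^ (n + 1) / gexp x (‖z‖ ^ 2) : ℝ) : ℂ)) =
      ((∫ z : ℂ, ((‖z‖ ^ 2) ^ (n + 1) / gexp x (‖z‖ ^ 2) : ℝ) : ℝ) : ℂ) from integral_ofReal]
  norm_cast
  -- now a real statement
  have hrad := MeasureTheory.integral_fun_norm_addHaar (volume : Measure ℂ)
    (fun r : ℝ => (r ^ 2) ^ (n + 1) / gexp x (r ^ 2))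
  rw [show (fun z : ℂ => (‖z‖ ^ 2) ^ (n + 1) / gexp x (‖z‖ ^ 2)) =
      (fun z : ℂ => (fun r : ℝ => (r ^ 2) ^ (n + 1) / gexp x (r ^ 2)) ‖z‖) from rfl, hrad]
  rw [Complex.finrank_real_complex]
  have hball : (volume.real (Metric.ball (0:ℂ) 1) : ℝ) = Real.pi := by
    rw [measureReal_def, Complex.volume_ball]
    simp [ENNReal.toReal_mul]
  rw [hball]
  -- substitution y = t^2
  have hsub := integral_comp_rpow_Ioi (fun t => t ^ (n + 1) / gexp x t) (p := 2) two_ne_zero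
  have hcong : ∀ y ∈ Set.Ioi (0:ℝ),
      (|(2:ℝ)| * y ^ ((2:ℝ) - 1)) • ((fun t => t ^ (n + 1) / gexp x t) (y ^ (2:ℝ)))
        = 2 * (y ^ (2 - 1) • ((y ^ 2) ^ (n + 1) / gexp x (y ^ 2))) := by
    intro y hy
    have hy0 : (0:ℝ) < y := hy
    have hrp : y ^ (2:ℝ) = y ^ 2 := by
      rw [← Real.rpow_natCast y 2]; norm_num
    simp only [hrp, smul_eq_mul]
    rw [show ((2:ℝ) - 1 : ℝ) = 1 by norm_num, Real.rpow_one]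
    norm_num
    ring
  rw [setIntegral_congr_fun measurableSet_Ioi hcong] at hsub
  rw [integral_const_mul] at hsub
  have : momI x (n + 1) = 2 * ∫ y in Set.Ioi (0:ℝ), y ^ (2 - 1) • ((y ^ 2) ^ (n + 1) / gexp x (y ^ 2)) := by
    rw [momI, ← hsub]
  rw [this]
  simp only [smul_eq_mul, nsmul_eq_mul]
  push_cast
  ring

lemma integral_offdiag (x : ℕ → ℝ) (n m : ℕ) (hm : m ≠ n + 1) :
    (∫ z : ℂ, z * z ^ n * (starRingEnd ℂ) z ^ m / (gexp x (‖z‖ ^ 2) : ℂ)) = 0 := by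
  set f : ℂ → ℂ := fun z => z * z ^ n * (starRingEnd ℂ) z ^ m / (gexp x (‖z‖ ^ 2) : ℂ) with hf
  set k : ℤ := (n : ℤ) + 1 - (m : ℤ) with hk
  have hk0 : k ≠ 0 := by
    simp only [hk, sub_ne_zero]
    exact_mod_cast fun h => hm (by exact_mod_cast h.symm)
  have hkR : ((k : ℝ)) ≠ 0 := Int.cast_ne_zero.mpr hk0
  set θ : ℝ := Real.pi / (k : ℝ) with hθ
  set a : Circle := Circle.exp θ with ha
  have hrot := ((rotation a).measurePreserving).integral_comp
    (rotation a).toHomeomorph.measurableEmbedding f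
  have hfa : ∀ z : ℂ, f (rotation a z) = -f z := by
    intro z
    have hnorm : ‖(a : ℂ) * z‖ = ‖z‖ := by
      rw [norm_mul, Circle.norm_coe, one_mul]
    have hcoef : ((a : ℂ)) ^ (n + 1) * (starRingEnd ℂ) (a : ℂ) ^ m = -1 := by
      rw [ha, Circle.coe_exp, ← Complex.exp_conj]
      have hconj : (starRingEnd ℂ) ((θ : ℂ) * Complex.I) = -((θ : ℂ) * Complex.I) := by
        simp [Complex.conj_ofReal]
      rw [hconj, ← Complex.exp_nat_mul, ← Complex.exp_nat_mul, ← Complex.exp_add]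
      have harg : (↑(n + 1) : ℂ) * ((θ : ℂ) * Complex.I) + (m : ℂ) * -((θ : ℂ) * Complex.I)
          = (k : ℂ) * (θ : ℂ) * Complex.I := by
        rw [hk]
        push_cast
        ring
      rw [harg]
      have hkC : ((k : ℂ)) ≠ 0 := Int.cast_ne_zero.mpr hk0
      have hkθ : (k : ℂ) * (θ : ℂ) = (Real.pi : ℂ) := by
        rw [hθ]
        push_cast
        rw [mul_comm, div_mul_cancel₀ _ hkC]
      rw [hkθ, Complex.exp_pi_mul_I]
    simp only [hf, rotation_apply, hnorm]
    have : (a : ℂ) * z * ((a : ℂ) * z) ^ n * (starRingEnd ℂ) ((a : ℂ) * z) ^ m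
        = ((a : ℂ) ^ (n + 1) * (starRingEnd ℂ) (a : ℂ) ^ m) * (z * z ^ n * (starRingEnd ℂ) z ^ m) := by
      rw [map_mul]
      ring
    rw [this, hcoef]
    ring_nf
  rw [funext hfa] at hrot
  rw [integral_neg] at hrot
  have : (2 : ℂ) * ∫ z, f z = 0 := by linear_combination -hrot
  simpa using this

/-- the Berezin–Klauder–Toeplitz quantization of `f(z) = z` is the
lowering operator: its matrix elements satisfy, for all `n m`,
`(1/(μ₀ π √(x̃ₙ! x̃ₘ!))) ∫_ℂ z · zⁿ (conj z)ᵐ / N(|z|²) dA(z) = √(x̃_{n+1}) δ_{m,n+1}`,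
where `x̃_{n+1} = x̃_{n+1}!/x̃ₙ!`. -/
theorem stmt_5 (x : ℕ → ℝ) (hx0 : x 0 = 0) (hpos : ∀ n, 1 ≤ n → 0 < x n)
    (hlim : Filter.Tendsto x Filter.atTop Filter.atTop)
    (hint : ∀ n : ℕ, IntegrableOn (fun t => t ^ n / gexp x t) (Set.Ioi 0)) :
    ∀ n m : ℕ,
      (1 / ((mu x 0 * Real.pi * Real.sqrt (tfact x n * tfact x m) : ℝ) : ℂ)) *
          ∫ z : ℂ, z * z ^ n * (starRingEnd ℂ) z ^ m / (gexp x (‖z‖ ^ 2) : ℂ) =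
        if m = n + 1 then (Real.sqrt (tfact x (n + 1) / tfact x n) : ℂ) else 0 := by
  intro n m
  by_cases hm : m = n + 1
  · subst hm
    rw [if_pos rfl, integral_diag x n]
    have hμ0 : 0 < mu x 0 :=
      div_pos (momI_pos x hpos hlim hint 0) (gfact_pos x hpos 0)
    have hTn : 0 < tfact x n :=
      mul_pos (div_pos (div_pos (momI_pos x hpos hlim hint n) (gfact_pos x hpos n)) hμ0)
        (gfact_pos x hpos n)
    have hTn1 : 0 < tfact x (n + 1) :=
      mul_pos (div_pos (div_pos (momI_pos x hpos hlim hint (n + 1)) (gfact_pos x hpos (n + 1))) hμ0)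
        (gfact_pos x hpos (n + 1))
    have hmom : momI x (n + 1) = mu x 0 * tfact x (n + 1) := by
      simp only [tfact, mu]
      field_simp [(gfact_pos x hpos 0).ne', (gfact_pos x hpos (n + 1)).ne',
        (momI_pos x hpos hlim hint 0).ne']
    rw [show (1 / ((mu x 0 * Real.pi * Real.sqrt (tfact x n * tfact x (n + 1)) : ℝ) : ℂ)) *
        ((Real.pi * momI x (n + 1) : ℝ) : ℂ) =
        (((Real.pi * momI x (n + 1)) /
          (mu x 0 * Real.pi * Real.sqrt (tfact x n * tfact x (n + 1))) : ℝ) : ℂ) by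
      push_cast; ring]
    rw [Complex.ofReal_inj]
    have hsn := Real.sqrt_pos.mpr hTn
    have hsn1 := Real.sqrt_pos.mpr hTn1
    rw [hmom, Real.sqrt_mul hTn.le, Real.sqrt_div hTn1.le]
    rw [div_eq_div_iff (by positivity) hsn.ne']
    linear_combination (-(Real.pi * mu x 0 * Real.sqrt (tfact x n))) *
      Real.mul_self_sqrt hTn1.le
  · rw [if_neg hm, integral_offdiag x n m hm, mul_zero]
end

section
/- In the setting of the renormalized coherent-state quantization (finite moments 𝓘(n) = ∫₀^∞ t^n/N(t) dt, μ_n = 𝓘(n)/x_n!, x̃_n! = (μ_n/μ_0) x_n!, x̃_n := x̃_n!/x̃_{n−1}!), the quantization of the classical harmonic-oscillator Hamiltonian f(z) = |z|² is the diagonal operator x̃_{N+1}: for all n, m ∈ ℕ, (1/(μ_0 π √(x̃_n! x̃_m!))) ∫_ℂ |z|² z^n (conj z)^m / N(|z|²) dA(z) = x̃_{n+1} · δ_{n,m}. In particular the spectrum of the quantized |z|² is the shifted renormalized sequence (x̃_{n+1})_{n∈ℕ}. -/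
open MeasureTheory

lemma gfact_pos_aux {x : ℕ → ℝ} (hpos : ∀ n, 1 ≤ n → 0 < x n) (n : ℕ) : 0 < gfact x n := by
  refine Finset.prod_pos fun k _ => hpos _ (Nat.le_add_left 1 k)

lemma gexp_summable_aux {x : ℕ → ℝ} (hpos : ∀ n, 1 ≤ n → 0 < x n)
    (hlim : Filter.Tendsto x Filter.atTop Filter.atTop) {t : ℝ} (ht : 0 ≤ t) :
    Summable (fun n : ℕ => t ^ n / gfact x n) := by
  apply summable_of_ratio_norm_eventually_le (r := 1/2) (by norm_num)
  have h := hlim.eventually_ge_atTop (2 * t + 1)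
  rw [Filter.eventually_atTop] at h ⊢
  obtain ⟨M, hM⟩ := h
  refine ⟨M, fun n hn => ?_⟩
  have hx : 2 * t + 1 ≤ x (n + 1) := hM _ (le_trans hn (Nat.le_succ n))
  have hxpos : 0 < x (n + 1) := hpos _ (Nat.le_add_left 1 n)
  have hg := gfact_pos_aux hpos n
  have hg' := gfact_pos_aux hpos (n + 1)
  have hnn : (0:ℝ) ≤ t ^ n / gfact x n := div_nonneg (pow_nonneg ht n) hg.le
  have hnn' : (0:ℝ) ≤ t ^ (n+1) / gfact x (n+1) := div_nonneg (pow_nonneg ht _) hg'.le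
  rw [Real.norm_of_nonneg hnn', Real.norm_of_nonneg hnn]
  have hgf : gfact x (n + 1) = gfact x n * x (n + 1) := by
    simp [gfact, Finset.prod_range_succ]
  rw [hgf, pow_succ]
  have key : t ^ n * t / (gfact x n * x (n + 1)) = (t / x (n + 1)) * (t ^ n / gfact x n) := by
    field_simp
  rw [key]
  have hfrac : t / x (n + 1) ≤ 1 / 2 := by
    rw [div_le_div_iff₀ hxpos (by norm_num)]
    nlinarith
  exact mul_le_mul_of_nonneg_right hfrac hnn

lemma gexp_ge_one_aux {x : ℕ → ℝ} (hpos : ∀ n, 1 ≤ n → 0 < x n)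
    (hlim : Filter.Tendsto x Filter.atTop Filter.atTop) {t : ℝ} (ht : 0 ≤ t) :
    1 ≤ gexp x t := by
  have hs := gexp_summable_aux hpos hlim ht
  have h0 : t ^ 0 / gfact x 0 = 1 := by simp [gfact]
  have := Summable.le_tsum hs 0 (fun j _ =>
    div_nonneg (pow_nonneg ht j) (gfact_pos_aux hpos j).le)
  rw [h0] at this
  exact this

lemma momI_pos_aux {x : ℕ → ℝ} (hpos : ∀ n, 1 ≤ n → 0 < x n)
    (hlim : Filter.Tendsto x Filter.atTop Filter.atTop)
    (hint : ∀ n : ℕ, IntegrableOn (fun t => t ^ n / gexp x t) (Set.Ioi 0)) (n : ℕ) :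
    0 < momI x n := by
  rw [momI]
  have hnn : 0 ≤ᵐ[volume.restrict (Set.Ioi (0:ℝ))] fun t => t ^ n / gexp x t := by
    refine (ae_restrict_iff' measurableSet_Ioi).2 (ae_of_all _ fun t ht => ?_)
    have := gexp_ge_one_aux hpos hlim (le_of_lt ht)
    exact div_nonneg (pow_nonneg (le_of_lt ht) n) (by linarith)
  rw [setIntegral_pos_iff_support_of_nonneg_ae hnn (hint n)]
  have hsub : Set.Ioi (0:ℝ) ⊆ Function.support fun t => t ^ n / gexp x t := by
    intro t ht
    have h1 := gexp_ge_one_aux hpos hlim (le_of_lt ht)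
    have : (0:ℝ) < t ^ n / gexp x t := div_pos (pow_pos ht n) (by linarith)
    exact ne_of_gt this
  rw [Set.inter_eq_right.2 hsub]
  simp [Real.volume_Ioi]

/-- the quantization of the classical harmonic-oscillator
Hamiltonian `f(z) = |z|²` is the diagonal operator `x̃_{N+1}`: for all `n m`,
`(1/(μ₀ π √(x̃ₙ! x̃ₘ!))) ∫_ℂ |z|² zⁿ (conj z)ᵐ / N(|z|²) dA(z) = x̃_{n+1} δ_{n,m}`,
where `x̃_{n+1} = x̃_{n+1}!/x̃ₙ!`; in particular the quantized `|z|²` is diagonal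
in the basis `(eₙ)` with spectrum the shifted renormalized sequence. -/
theorem stmt_6 (x : ℕ → ℝ) (hx0 : x 0 = 0) (hpos : ∀ n, 1 ≤ n → 0 < x n)
    (hlim : Filter.Tendsto x Filter.atTop Filter.atTop)
    (hint : ∀ n : ℕ, IntegrableOn (fun t => t ^ n / gexp x t) (Set.Ioi 0)) :
    ∀ n m : ℕ,
      (1 / ((mu x 0 * Real.pi * Real.sqrt (tfact x n * tfact x m) : ℝ) : ℂ)) *
          ∫ z : ℂ, (‖z‖ ^ 2 : ℂ) * z ^ n * (starRingEnd ℂ) z ^ m / (gexp x (‖z‖ ^ 2) : ℂ) =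
        if n = m then ((tfact x (n + 1) / tfact x n : ℝ) : ℂ) else 0 := by
  intro n m
  have hgf : ∀ k, 0 < gfact x k := gfact_pos_aux hpos
  have hI : ∀ k, 0 < momI x k := momI_pos_aux hpos hlim hint
  set c : ℂ := ((n : ℂ) - (m : ℂ)) * Complex.I with hc
  set f₁ : ℝ → ℂ := fun r => ((r ^ (n + m + 3) / gexp x (r ^ 2) : ℝ) : ℂ) with hf₁
  set f₂ : ℝ → ℂ := fun θ => Complex.exp (c * θ) with hf₂
  have hpolar :
      (∫ z : ℂ, (‖z‖ ^ 2 : ℂ) * z ^ n * (starRingEnd ℂ) z ^ m / (gexp x (‖z‖ ^ 2) : ℂ)) =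
        (∫ r in Set.Ioi (0:ℝ), f₁ r) *
          ∫ θ in Set.Ioo (-Real.pi) Real.pi, f₂ θ := by
    rw [← Complex.integral_comp_polarCoord_symm
      (fun z : ℂ => (‖z‖ ^ 2 : ℂ) * z ^ n * (starRingEnd ℂ) z ^ m / (gexp x (‖z‖ ^ 2) : ℂ))]
    have htarget : polarCoord.target = Set.Ioi (0:ℝ) ×ˢ Set.Ioo (-Real.pi) Real.pi := rfl
    rw [htarget]
    have hcong : ∀ p ∈ Set.Ioi (0:ℝ) ×ˢ Set.Ioo (-Real.pi) Real.pi,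
        p.1 • ((‖Complex.polarCoord.symm p‖ ^ 2 : ℂ) * Complex.polarCoord.symm p ^ n *
            (starRingEnd ℂ) (Complex.polarCoord.symm p) ^ m /
              (gexp x (‖Complex.polarCoord.symm p‖ ^ 2) : ℂ)) = f₁ p.1 * f₂ p.2 := by
      rintro ⟨r, θ⟩ ⟨hr, hθ⟩
      simp only [Set.mem_Ioi] at hr
      have hz : Complex.polarCoord.symm (r, θ) = (r : ℂ) * Complex.exp (θ * Complex.I) := by
        rw [Complex.polarCoord_symm_apply, Complex.exp_mul_I]
        push_cast
        ring
      have hnorm : ‖Complex.polarCoord.symm (r, θ)‖ = r := by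
        rw [Complex.norm_polarCoord_symm]
        exact abs_of_pos hr
      rw [show ((r, θ) : ℝ × ℝ).1 = r from rfl, hnorm, hz]
      have hconj : (starRingEnd ℂ) ((r : ℂ) * Complex.exp (θ * Complex.I)) =
          (r : ℂ) * Complex.exp (-((θ : ℂ) * Complex.I)) := by
        rw [map_mul, Complex.conj_ofReal, ← Complex.exp_conj]
        congr 1
        simp [Complex.conj_ofReal]
      rw [hconj]
      have hNpos : (0:ℝ) < gexp x (r ^ 2) :=
        lt_of_lt_of_le one_pos (gexp_ge_one_aux hpos hlim (sq_nonneg r))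
      have hNne : ((gexp x (r ^ 2) : ℝ) : ℂ) ≠ 0 := Complex.ofReal_ne_zero.2 (ne_of_gt hNpos)
      simp only [hf₁, hf₂, hc]
      rw [Complex.real_smul, Complex.ofReal_div, Complex.ofReal_pow]
      rw [mul_pow, mul_pow, ← Complex.exp_nat_mul, ← Complex.exp_nat_mul]
      rw [show (((n:ℂ) - (m:ℂ)) * Complex.I) * (θ:ℂ) =
          (n:ℂ) * ((θ:ℂ) * Complex.I) + (m:ℂ) * (-((θ:ℂ) * Complex.I)) by ring]
      rw [Complex.exp_add]
      field_simp
      ring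
    rw [setIntegral_congr_fun (measurableSet_Ioi.prod measurableSet_Ioo) hcong]
    rw [MeasureTheory.Measure.volume_eq_prod ℝ ℝ]
    exact setIntegral_prod_mul f₁ f₂ _ _
  rw [hpolar]
  have htf : ∀ k, tfact x k = momI x k / momI x 0 := by
    intro k
    have hg0 : gfact x 0 = 1 := by simp [gfact]
    rw [tfact, mu, mu, hg0, div_one]
    field_simp
    rw [mul_comm (gfact x k) (momI x 0)]
    exact mul_div_mul_right _ _ (ne_of_gt (hgf k))
  have hmu0 : mu x 0 = momI x 0 := by
    have hg0 : gfact x 0 = 1 := by simp [gfact]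
    rw [mu, hg0, div_one]
  by_cases hnm : n = m
  · subst hnm
    rw [if_pos rfl]
    -- angular integral = 2π
    have hang : (∫ θ in Set.Ioo (-Real.pi) Real.pi, f₂ θ) = ((2 * Real.pi : ℝ) : ℂ) := by
      have hc0 : c = 0 := by simp [hc]
      simp only [hf₂, hc0, zero_mul, Complex.exp_zero]
      rw [setIntegral_const, measureReal_def, Real.volume_Ioo,
        ENNReal.toReal_ofReal (by linarith [Real.pi_pos])]
      rw [Complex.real_smul, mul_one]
      push_cast
      ring
    -- radial integral = momI (n+1) / 2
    have hrad : (∫ r in Set.Ioi (0:ℝ), f₁ r) = ((momI x (n + 1) / 2 : ℝ) : ℂ) := by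
      simp only [hf₁]
      have hreal : ∫ r in Set.Ioi (0:ℝ), r ^ (n + n + 3) / gexp x (r ^ 2) =
          momI x (n + 1) / 2 := by
        have hsub := integral_comp_rpow_Ioi (fun t => t ^ (n + 1) / gexp x t)
          (p := 2) (by norm_num)
        have hcong2 : ∀ r ∈ Set.Ioi (0:ℝ),
            (|(2:ℝ)| * r ^ ((2:ℝ) - 1)) • ((r ^ (2:ℝ)) ^ (n + 1) / gexp x (r ^ (2:ℝ))) =
              2 * (r ^ (n + n + 3) / gexp x (r ^ 2)) := by
          intro r hr
          simp only [Set.mem_Ioi] at hr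
          have h2 : r ^ (2:ℝ) = r ^ (2:ℕ) := by
            rw [show (2:ℝ) = ((2:ℕ):ℝ) by norm_num, Real.rpow_natCast]
          rw [show (2:ℝ) - 1 = (1:ℝ) by norm_num, Real.rpow_one, h2]
          rw [abs_of_pos (by norm_num : (0:ℝ) < 2), smul_eq_mul]
          have hN : (0:ℝ) < gexp x (r ^ 2) :=
            lt_of_lt_of_le one_pos (gexp_ge_one_aux hpos hlim (sq_nonneg r))
          field_simp
          ring
        rw [setIntegral_congr_fun measurableSet_Ioi hcong2] at hsub
        rw [integral_const_mul] at hsub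
        have h5 : momI x (n + 1) =
            2 * ∫ r in Set.Ioi (0:ℝ), r ^ (n + n + 3) / gexp x (r ^ 2) := by
          rw [momI]; exact hsub.symm
        rw [h5]
        ring
      have hcoe : ∫ r in Set.Ioi (0:ℝ), ((r ^ (n + n + 3) / gexp x (r ^ 2) : ℝ) : ℂ) =
          ((∫ r in Set.Ioi (0:ℝ), r ^ (n + n + 3) / gexp x (r ^ 2) : ℝ) : ℂ) := integral_ofReal
      rw [hcoe, hreal]
    rw [hang, hrad]
    rw [htf n, htf (n + 1), hmu0]
    have h0 := hI 0
    have hn := hI n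
    have hn1 := hI (n + 1)
    have hsqrt : Real.sqrt (momI x n / momI x 0 * (momI x n / momI x 0)) =
        momI x n / momI x 0 := Real.sqrt_mul_self (by positivity)
    rw [hsqrt]
    have hpi := Real.pi_pos
    have h0' : ((momI x 0 : ℝ) : ℂ) ≠ 0 := Complex.ofReal_ne_zero.2 (ne_of_gt h0)
    have hn' : ((momI x n : ℝ) : ℂ) ≠ 0 := Complex.ofReal_ne_zero.2 (ne_of_gt hn)
    have hpi' : ((Real.pi : ℝ) : ℂ) ≠ 0 := Complex.ofReal_ne_zero.2 (ne_of_gt hpi)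
    push_cast
    field_simp
  · rw [if_neg hnm]
    have hang0 : (∫ θ in Set.Ioo (-Real.pi) Real.pi, f₂ θ) = 0 := by
      have hcne : c ≠ 0 := by
        refine mul_ne_zero (sub_ne_zero.2 fun h => hnm ?_) Complex.I_ne_zero
        exact_mod_cast h
      have h1 : (∫ θ in Set.Ioo (-Real.pi) Real.pi, f₂ θ) =
          ∫ θ in (-Real.pi)..Real.pi, Complex.exp (c * θ) := by
        rw [intervalIntegral.integral_of_le (by linarith [Real.pi_pos])]
        rw [integral_Ioc_eq_integral_Ioo]
      rw [h1, integral_exp_mul_complex hcne]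
      have hk : Complex.exp (c * (Real.pi : ℂ)) = Complex.exp (c * ((-Real.pi : ℝ) : ℂ)) := by
        have : c * (Real.pi : ℂ) =
            c * ((-Real.pi : ℝ) : ℂ) + ((n : ℤ) - (m : ℤ) : ℤ) * (2 * (Real.pi : ℂ) * Complex.I) := by
          simp only [hc]
          push_cast
          ring
        rw [this, Complex.exp_add, Complex.exp_int_mul_two_pi_mul_I, mul_one]
      rw [hk, sub_self, zero_div]
    rw [hang0, mul_zero, mul_zero]
end

section
/- (Euler integral representation of the Kummer function) For all real a > 0, ε > 0, and every t ∈ ℝ: Σ_{n=0}^∞ (∏_{k=0}^{n−1} (a+k)/(a+ε+k)) · t^n/n! = (Γ(a+ε)/(Γ(a) Γ(ε))) ∫₀¹ e^{t u} u^{a−1} (1−u)^{ε−1} du; i.e., ₁F₁(a; a+ε; t) admits the stated Euler-type integral representation. -/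
open MeasureTheory Real Set

private lemma gamma_add_nat' (x : ℝ) (hx : 0 < x) (n : ℕ) :
    Real.Gamma (x + n) = (∏ k ∈ Finset.range n, (x + k)) * Real.Gamma x := by
  induction n with
  | zero => simp
  | succ n ih =>
    have hxn : x + (n : ℝ) ≠ 0 := by positivity
    have h : (x + ((n : ℕ) + 1 : ℕ) : ℝ) = (x + n) + 1 := by push_cast; ring
    rw [h, Real.Gamma_add_one hxn, ih, Finset.prod_range_succ]
    ring

private lemma beta_integrable' (p q : ℝ) (hp : 0 < p) (hq : 0 < q) :
    IntegrableOn (fun u : ℝ => u ^ (p - 1) * (1 - u) ^ (q - 1)) (Set.Ioo 0 1) := by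
  have hC : IntervalIntegrable
      (fun x : ℝ => (x : ℂ) ^ ((p : ℂ) - 1) * ((1 : ℂ) - x) ^ ((q : ℂ) - 1)) volume 0 1 :=
    Complex.betaIntegral_convergent (by simpa using hp) (by simpa using hq)
  have hC' : IntegrableOn
      (fun x : ℝ => (x : ℂ) ^ ((p : ℂ) - 1) * ((1 : ℂ) - x) ^ ((q : ℂ) - 1))
      (Set.Ioo 0 1) volume := by
    have := (intervalIntegrable_iff_integrableOn_Ioc_of_le (by norm_num : (0:ℝ) ≤ 1)).mp hC
    exact this.mono_set Set.Ioo_subset_Ioc_self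
  refine MeasureTheory.IntegrableOn.congr_fun hC'.re (fun u hu => ?_) measurableSet_Ioo
  have hu0 : (0:ℝ) ≤ u := hu.1.le
  have hu1 : (0:ℝ) ≤ 1 - u := by linarith [hu.2]
  have h1 : ((u : ℂ)) ^ ((p : ℂ) - 1) = ((u ^ (p - 1) : ℝ) : ℂ) := by
    rw [Complex.ofReal_cpow hu0]; push_cast; ring_nf
  have h2 : ((1 : ℂ) - u) ^ ((q : ℂ) - 1) = (((1 - u) ^ (q - 1) : ℝ) : ℂ) := by
    rw [Complex.ofReal_cpow hu1]; push_cast; ring_nf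
  simp [h1, h2, ← Complex.ofReal_mul]

private lemma beta_eval' (p q : ℝ) (hp : 0 < p) (hq : 0 < q) :
    ∫ u in Set.Ioo (0:ℝ) 1, u ^ (p - 1) * (1 - u) ^ (q - 1)
      = Real.Gamma p * Real.Gamma q / Real.Gamma (p + q) := by
  have key := Complex.Gamma_mul_Gamma_eq_betaIntegral
    (s := (p : ℂ)) (t := (q : ℂ)) (by simpa using hp) (by simpa using hq)
  have hbeta : Complex.betaIntegral p q
      = ((∫ u in Set.Ioo (0:ℝ) 1, u ^ (p - 1) * (1 - u) ^ (q - 1) : ℝ) : ℂ) := by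
    have hcg : (∫ u in Set.Ioo (0:ℝ) 1, (u:ℂ) ^ ((p:ℂ) - 1) * ((1:ℂ) - u) ^ ((q:ℂ) - 1))
        = ∫ u in Set.Ioo (0:ℝ) 1, ((u ^ (p - 1) * (1 - u) ^ (q - 1) : ℝ) : ℂ) := by
      refine setIntegral_congr_fun measurableSet_Ioo (fun u hu => ?_)
      have hu0 : (0:ℝ) ≤ u := hu.1.le
      have hu1 : (0:ℝ) ≤ 1 - u := by linarith [hu.2]
      have h1 : ((u : ℂ)) ^ ((p : ℂ) - 1) = ((u ^ (p - 1) : ℝ) : ℂ) := by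
        rw [Complex.ofReal_cpow hu0]; push_cast; ring_nf
      have h2 : ((1 : ℂ) - u) ^ ((q : ℂ) - 1) = (((1 - u) ^ (q - 1) : ℝ) : ℂ) := by
        rw [Complex.ofReal_cpow hu1]; push_cast; ring_nf
      simp [h1, h2, ← Complex.ofReal_mul]
    rw [Complex.betaIntegral, intervalIntegral.integral_of_le zero_le_one,
      MeasureTheory.integral_Ioc_eq_integral_Ioo, hcg]
    exact integral_ofReal
  rw [hbeta, ← Complex.ofReal_add, Complex.Gamma_ofReal, Complex.Gamma_ofReal,
    Complex.Gamma_ofReal, ← Complex.ofReal_mul, ← Complex.ofReal_mul] at key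
  have key' : Real.Gamma p * Real.Gamma q
      = Real.Gamma (p + q) * ∫ u in Set.Ioo (0:ℝ) 1, u ^ (p - 1) * (1 - u) ^ (q - 1) :=
    Complex.ofReal_inj.mp key
  have hpos : 0 < Real.Gamma (p + q) := Real.Gamma_pos_of_pos (by linarith)
  field_simp at key' ⊢
  linarith [key']

/-- Euler integral representation of the Kummer function: for
all real `a > 0`, `ε > 0` and every `t`,
`Σₙ ((a)ₙ/(a+ε)ₙ) tⁿ/n! = (Γ(a+ε)/(Γ(a)Γ(ε))) ∫₀¹ e^{tu} u^{a−1} (1−u)^{ε−1} du`,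
where `(a)ₙ = a(a+1)⋯(a+n−1)` is the Pochhammer symbol. -/
theorem stmt_12 (a ε : ℝ) (ha : 0 < a) (hε : 0 < ε) (t : ℝ) :
    ∑' n : ℕ, (∏ k ∈ Finset.range n, (a + k) / (a + ε + k)) * t ^ n / (n.factorial : ℝ) =
      (Real.Gamma (a + ε) / (Real.Gamma a * Real.Gamma ε)) *
        ∫ u in Set.Ioo (0 : ℝ) 1, Real.exp (t * u) * u ^ (a - 1) * (1 - u) ^ (ε - 1) := by
  have hΓa : 0 < Real.Gamma a := Real.Gamma_pos_of_pos ha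
  have hΓε : 0 < Real.Gamma ε := Real.Gamma_pos_of_pos hε
  have hΓaε : 0 < Real.Gamma (a + ε) := Real.Gamma_pos_of_pos (by linarith)
  set C : ℝ := Real.Gamma (a + ε) / (Real.Gamma a * Real.Gamma ε) with hC
  set f : ℕ → ℝ → ℝ := fun n u =>
    t ^ n * u ^ n / (n.factorial : ℝ) * (u ^ (a - 1) * (1 - u) ^ (ε - 1)) with hf
  have hbase := beta_integrable' a ε ha hε
  have hmeas : ∀ n : ℕ, AEStronglyMeasurable (f n)
      (volume.restrict (Set.Ioo (0:ℝ) 1)) := by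
    intro n
    apply Measurable.aestronglyMeasurable
    fun_prop
  have h_bound : ∀ (n : ℕ), ∀ u ∈ Set.Ioo (0:ℝ) 1,
      ‖f n u‖ ≤ |t| ^ n / (n.factorial : ℝ) * (u ^ (a - 1) * (1 - u) ^ (ε - 1)) := by
    intro n u hu
    have hu0 : 0 < u := hu.1
    have hu1 : u < 1 := hu.2
    have h1 : (0:ℝ) ≤ u ^ (a - 1) * (1 - u) ^ (ε - 1) := by
      have : (0:ℝ) < 1 - u := by linarith
      positivity
    have habs : ‖f n u‖
        = |t| ^ n * u ^ n / (n.factorial : ℝ) * (u ^ (a - 1) * (1 - u) ^ (ε - 1)) := by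
      rw [hf]; simp only [Real.norm_eq_abs]
      rw [abs_mul, abs_div, abs_mul, abs_pow, abs_pow, abs_of_pos hu0,
        abs_of_nonneg h1, Nat.abs_cast]
    rw [habs]
    have hun : u ^ n ≤ 1 := pow_le_one₀ hu0.le hu1.le
    have hfac : (0:ℝ) < (n.factorial : ℝ) := by positivity
    calc |t| ^ n * u ^ n / (n.factorial : ℝ) * (u ^ (a - 1) * (1 - u) ^ (ε - 1))
        ≤ |t| ^ n * 1 / (n.factorial : ℝ) * (u ^ (a - 1) * (1 - u) ^ (ε - 1)) := by
          gcongr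
      _ = |t| ^ n / (n.factorial : ℝ) * (u ^ (a - 1) * (1 - u) ^ (ε - 1)) := by ring
  have h_int : ∀ n : ℕ, IntegrableOn (f n) (Set.Ioo (0:ℝ) 1) := by
    intro n
    refine (hbase.const_mul (|t| ^ n / (n.factorial : ℝ))).mono' (hmeas n) ?_
    filter_upwards [ae_restrict_mem measurableSet_Ioo] with u hu
    exact h_bound n u hu
  set B : ℝ := ∫ u in Set.Ioo (0:ℝ) 1, u ^ (a - 1) * (1 - u) ^ (ε - 1) with hB
  have h_norm_le : ∀ n : ℕ,
      (∫ u in Set.Ioo (0:ℝ) 1, ‖f n u‖) ≤ |t| ^ n / (n.factorial : ℝ) * B := by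
    intro n
    have h1 : (∫ u in Set.Ioo (0:ℝ) 1, ‖f n u‖)
        ≤ ∫ u in Set.Ioo (0:ℝ) 1,
            |t| ^ n / (n.factorial : ℝ) * (u ^ (a - 1) * (1 - u) ^ (ε - 1)) :=
      setIntegral_mono_on (h_int n).norm (hbase.const_mul _) measurableSet_Ioo
        (h_bound n)
    rw [integral_const_mul] at h1
    exact h1
  have h_sum : Summable fun n : ℕ => ∫ u in Set.Ioo (0:ℝ) 1, ‖f n u‖ := by
    refine Summable.of_nonneg_of_le
      (fun n => integral_nonneg fun u => norm_nonneg _) h_norm_le ?_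
    exact (Real.summable_pow_div_factorial |t|).mul_right B
  have swap : ∑' n : ℕ, (∫ u in Set.Ioo (0:ℝ) 1, f n u)
      = ∫ u in Set.Ioo (0:ℝ) 1, ∑' n : ℕ, f n u :=
    integral_tsum_of_summable_integral_norm h_int h_sum
  have h_pt : ∀ u ∈ Set.Ioo (0:ℝ) 1,
      ∑' n : ℕ, f n u = Real.exp (t * u) * u ^ (a - 1) * (1 - u) ^ (ε - 1) := by
    intro u hu
    have e1 : ∑' n : ℕ, f n u
        = (∑' n : ℕ, (t * u) ^ n / (n.factorial : ℝ)) * (u ^ (a - 1) * (1 - u) ^ (ε - 1)) := by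
      rw [← tsum_mul_right]
      congr 1; funext n; rw [hf]; simp only [mul_pow]; try ring
    have e2 : (∑' n : ℕ, (t * u) ^ n / (n.factorial : ℝ)) = Real.exp (t * u) := by
      rw [Real.exp_eq_exp_ℝ, NormedSpace.exp_eq_tsum_div]
    rw [e1, e2]; ring
  have h_each : ∀ n : ℕ, (∫ u in Set.Ioo (0:ℝ) 1, f n u)
      = t ^ n / (n.factorial : ℝ)
        * (Real.Gamma (a + n) * Real.Gamma ε / Real.Gamma (a + n + ε)) := by
    intro n
    have hcongr : ∀ u ∈ Set.Ioo (0:ℝ) 1, f n u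
        = t ^ n / (n.factorial : ℝ) * (u ^ ((a + n) - 1) * (1 - u) ^ (ε - 1)) := by
      intro u hu
      have hu0 : 0 < u := hu.1
      have hpow : u ^ ((a + (n:ℝ)) - 1) = u ^ (n:ℕ) * u ^ (a - 1) := by
        rw [← Real.rpow_natCast u n, ← Real.rpow_add hu0]
        congr 1; ring
      rw [hf]; simp only
      rw [hpow]; ring
    rw [setIntegral_congr_fun measurableSet_Ioo hcongr, integral_const_mul,
      beta_eval' (a + n) ε (by positivity) hε]
  have h_term : ∀ n : ℕ,
      (∏ k ∈ Finset.range n, (a + k) / (a + ε + k)) * t ^ n / (n.factorial : ℝ)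
        = C * ∫ u in Set.Ioo (0:ℝ) 1, f n u := by
    intro n
    rw [h_each n]
    have hg1 : Real.Gamma (a + n)
        = (∏ k ∈ Finset.range n, (a + k)) * Real.Gamma a := gamma_add_nat' a ha n
    have hg2 : Real.Gamma (a + n + ε)
        = (∏ k ∈ Finset.range n, (a + ε + k)) * Real.Gamma (a + ε) := by
      have : a + (n:ℝ) + ε = (a + ε) + n := by ring
      rw [this, gamma_add_nat' (a + ε) (by linarith) n]
    have hP2 : (0:ℝ) < ∏ k ∈ Finset.range n, (a + ε + k) := by
      refine Finset.prod_pos fun k _ => by positivity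
    have hprod : ∏ k ∈ Finset.range n, (a + k) / (a + ε + k)
        = (∏ k ∈ Finset.range n, (a + k)) / ∏ k ∈ Finset.range n, (a + ε + k) :=
      Finset.prod_div_distrib _ _
    rw [hprod, hg1, hg2, hC]
    have hfac : (0:ℝ) < (n.factorial : ℝ) := by positivity
    field_simp
    try ring
  calc ∑' n : ℕ, (∏ k ∈ Finset.range n, (a + k) / (a + ε + k)) * t ^ n / (n.factorial : ℝ)
      = ∑' n : ℕ, C * ∫ u in Set.Ioo (0:ℝ) 1, f n u := by
        exact tsum_congr h_term
    _ = C * ∑' n : ℕ, ∫ u in Set.Ioo (0:ℝ) 1, f n u := tsum_mul_left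
    _ = C * ∫ u in Set.Ioo (0:ℝ) 1, ∑' n : ℕ, f n u := by rw [swap]
    _ = C * ∫ u in Set.Ioo (0:ℝ) 1,
          Real.exp (t * u) * u ^ (a - 1) * (1 - u) ^ (ε - 1) := by
        rw [setIntegral_congr_fun measurableSet_Ioo h_pt]
end

section
/- Let q ≥ 1 be an integer and b_1, …, b_q real numbers with b_i < 1 for all i. Define the sequence x_0 = 0 and x_n = (∏_{i=1}^q (n − b_i)) / n^{q−1} for n ≥ 1. Then the generalized factorials are given by x_n! = (∏_{i=1}^q Γ(1 − b_i + n)/Γ(1 − b_i)) / (n!)^{q−1}, and consequently the associated exponential equals the generalized hypergeometric series N(t) = Σ_{n=0}^∞ t^n/x_n! = ₍q₎F₍q₎(1, 1, …, 1; 1−b_1, …, 1−b_q; t). -/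
lemma poch_gamma (x : ℝ) (hx : 0 < x) (n : ℕ) :
    ∏ k ∈ Finset.range n, (x + k) = Real.Gamma (x + n) / Real.Gamma x := by
  induction n with
  | zero => simp [div_self (Real.Gamma_pos_of_pos hx).ne']
  | succ n ih =>
    have hxn : (x + n : ℝ) ≠ 0 := by positivity
    have h1 : Real.Gamma (x + (n + 1 : ℕ)) = (x + n) * Real.Gamma (x + n) := by
      have := Real.Gamma_add_one hxn
      push_cast
      rw [show x + (n + 1 : ℝ) = x + n + 1 by ring, this]
    rw [Finset.prod_range_succ, ih, h1]
    field_simp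

lemma fact_prod (n : ℕ) : (n.factorial : ℝ) = ∏ k ∈ Finset.range n, ((k : ℝ) + 1) := by
  induction n with
  | zero => simp
  | succ n ih => rw [Finset.prod_range_succ, ← ih]; push_cast [Nat.factorial_succ]; ring

/-- for `q ≥ 1` and reals `b₁, …, b_q < 1`, the sequence
`x₀ = 0`, `xₙ = (∏ᵢ (n − bᵢ))/n^{q−1}` (n ≥ 1) has generalized factorials
`xₙ! = (∏ᵢ Γ(1 − bᵢ + n)/Γ(1 − bᵢ))/(n!)^{q−1}`, and consequently the
associated exponential equals the generalized hypergeometric series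
`N(t) = Σₙ tⁿ/xₙ! = ₍q₎F₍q₎(1,…,1; 1−b₁,…,1−b_q; t)`
(written via Pochhammer symbols `(a)ₙ = ∏_{k<n} (a+k)`). -/
theorem stmt_13 (q : ℕ) (hq : 1 ≤ q) (b : Fin q → ℝ) (hb : ∀ i, b i < 1) :
    (∀ n : ℕ,
      ∏ k ∈ Finset.range n, ((∏ i, ((k + 1 : ℝ) - b i)) / ((k + 1 : ℝ)) ^ (q - 1)) =
      (∏ i, Real.Gamma (1 - b i + n) / Real.Gamma (1 - b i)) / (n.factorial : ℝ) ^ (q - 1)) ∧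
    (∀ t : ℝ,
      ∑' n : ℕ, t ^ n /
          ∏ k ∈ Finset.range n, ((∏ i, ((k + 1 : ℝ) - b i)) / ((k + 1 : ℝ)) ^ (q - 1)) =
      ∑' n : ℕ,
        ((∏ i : Fin q, ∏ k ∈ Finset.range n, ((1 : ℝ) + k)) /
            (∏ i : Fin q, ∏ k ∈ Finset.range n, (1 - b i + k))) *
          t ^ n / (n.factorial : ℝ)) := by
  have hbi : ∀ i, (0:ℝ) < 1 - b i := fun i => by linarith [hb i]
  have hpoch : ∀ (i : Fin q) (n : ℕ), ∏ k ∈ Finset.range n, ((1:ℝ) - b i + k) =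
      Real.Gamma (1 - b i + n) / Real.Gamma (1 - b i) := fun i n => poch_gamma _ (hbi i) n
  have key : ∀ n : ℕ,
      ∏ k ∈ Finset.range n, ((∏ i, ((k + 1 : ℝ) - b i)) / ((k + 1 : ℝ)) ^ (q - 1)) =
      (∏ i, Real.Gamma (1 - b i + n) / Real.Gamma (1 - b i)) / (n.factorial : ℝ) ^ (q - 1) := by
    intro n
    rw [Finset.prod_div_distrib, Finset.prod_pow, ← fact_prod, Finset.prod_comm]
    congr 1
    refine Finset.prod_congr rfl fun i _ => ?_
    rw [← hpoch i n]
    exact Finset.prod_congr rfl fun k _ => by ring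
  refine ⟨key, fun t => tsum_congr fun n => ?_⟩
  rw [key n]
  have hfac : (n.factorial : ℝ) ≠ 0 := Nat.cast_ne_zero.mpr n.factorial_ne_zero
  have hS : ∀ i : Fin q, (0:ℝ) < ∏ k ∈ Finset.range n, ((1:ℝ) - b i + k) := by
    intro i
    exact Finset.prod_pos fun k _ => by have := hbi i; positivity
  have hSpos : (0:ℝ) < ∏ i : Fin q, ∏ k ∈ Finset.range n, ((1:ℝ) - b i + k) :=
    Finset.prod_pos fun i _ => hS i
  have hnum : ∏ i : Fin q, ∏ k ∈ Finset.range n, ((1 : ℝ) + k) = (n.factorial : ℝ) ^ q := by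
    rw [Finset.prod_const (b := ∏ k ∈ Finset.range n, ((1:ℝ) + k))]
    · congr 1
      · rw [fact_prod]; exact Finset.prod_congr rfl fun k _ => by ring
      · simp
  have hprod : (∏ i, Real.Gamma (1 - b i + n) / Real.Gamma (1 - b i)) =
      ∏ i : Fin q, ∏ k ∈ Finset.range n, ((1:ℝ) - b i + k) :=
    (Finset.prod_congr rfl fun i _ => (hpoch i n).symm)
  rw [hprod, hnum]
  have hqq : q - 1 + 1 = q := Nat.succ_pred_eq_of_pos hq
  rw [show (n.factorial:ℝ) ^ q = (n.factorial:ℝ) ^ (q-1) * n.factorial by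
    rw [← pow_succ, hqq]]
  field_simp
end

section
/- Let a, c, d be real numbers with c > 0, d > 0, |a| < c and a + d > 0, and consider the projective perturbation x_n = n + a n/(c n + d) for n ∈ ℕ. Define γ(x) = (√(c² x² + 2c(d − a) x + (a + d)²) − c x − a − d)/(2c). Then the perturbation is invertible with inverse given by γ: for every n ∈ ℕ, n = x_n + γ(x_n). -/
/-- The projective perturbation `xₙ = n + a n/(c n + d)`. -/
noncomputable def xproj (a c d : ℝ) (n : ℕ) : ℝ := (n : ℝ) + a * n / (c * n + d)

/-- The candidate inverse modulation
`γ(x) = (√(c²x² + 2c(d−a)x + (a+d)²) − cx − a − d)/(2c)`. -/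
noncomputable def γproj (a c d : ℝ) (x : ℝ) : ℝ :=
  (Real.sqrt (c ^ 2 * x ^ 2 + 2 * c * (d - a) * x + (a + d) ^ 2) - c * x - a - d) / (2 * c)

/-- for reals `a c d` with `c > 0`, `d > 0`, `|a| < c`,
`a + d > 0`, the projective perturbation `xₙ = n + a n/(c n + d)` is invertible
with inverse given by `γ`: for every `n`, `n = xₙ + γ(xₙ)`. -/
theorem stmt_17 (a c d : ℝ) (hc : 0 < c) (hd : 0 < d) (ha : |a| < c)
    (had : 0 < a + d) :
    ∀ n : ℕ, (n : ℝ) = xproj a c d n + γproj a c d (xproj a c d n) := by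
  intro n
  have ht : (0:ℝ) ≤ (n:ℝ) := Nat.cast_nonneg n
  set t : ℝ := (n : ℝ) with htdef
  have hq : 0 < c * t + d := by positivity
  have ha1 : -c < a := neg_lt_of_abs_lt ha
  have ha2 : a < c := lt_of_abs_lt ha
  set x : ℝ := xproj a c d n with hxdef
  have hx : x = t + a * t / (c * t + d) := rfl
  set R : ℝ := 2 * c * t - c * x + a + d with hRdef
  have hRq : R * (c * t + d) = (c * t + d) ^ 2 + a * d := by
    rw [hRdef, hx]
    field_simp
    ring
  have hR : 0 ≤ R := by
    have h1 : 0 < (c * t + d) ^ 2 + a * d := by nlinarith [sq_nonneg (c * t), mul_pos hd had, mul_nonneg (mul_nonneg hc.le ht) hd.le]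
    nlinarith
  have hD : c ^ 2 * x ^ 2 + 2 * c * (d - a) * x + (a + d) ^ 2 = R ^ 2 := by
    rw [hRdef, hx]
    field_simp
    ring
  have hsq : Real.sqrt (c ^ 2 * x ^ 2 + 2 * c * (d - a) * x + (a + d) ^ 2) = R := by
    rw [hD, Real.sqrt_sq hR]
  show t = x + γproj a c d x
  rw [γproj, hsq, hRdef]
  field_simp
  ring
end
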